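/- arXiv:2509.05854 — 4 statements merged into one kernel-verified Lean document; each statement's English description precedes it below -/
import Mathlib

section
/- Let M be a nonempty separable metrizable space which is analytic (i.e. there is a continuous surjection from the Baire space ℕ→ℕ onto M) but not σ-compact. Then 𝐤(M) ≡_T (ℕ→ℕ, ≤) ≡_T 𝐤𝐜(M), where ≤ is the coordinatewise order on ℕ→ℕ. -/
open Set Topology Filter

universe u v u' v'

/-- A relation: a triple consisting of a domain, a range, and a relation between them. -/
structure TRel : Type (max (u + 1) (v + 1)) where
  dom : Type u
  rng : Type v
  rel : dom → rng → Prop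

namespace TRel

/-- A Tukey morphism from `A` to `B`: `A ≥_T B`. -/
def Tukey (A : TRel.{u, v}) (B : TRel.{u', v'}) : Prop :=
  ∃ (ψ : B.dom → A.dom) (φ : A.rng → B.rng),
    ∀ (b : B.dom) (a : A.rng), A.rel (ψ b) a → B.rel b (φ a)

/-- Tukey equivalence. -/
def TukeyEquiv (A : TRel.{u, v}) (B : TRel.{u', v'}) : Prop :=
  A.Tukey B ∧ B.Tukey A

/-- `C` is cofinal in the relation `A`. -/
def Cofinal (A : TRel) (C : Set A.rng) : Prop :=
  ∀ x : A.dom, ∃ y ∈ C, A.rel x y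

/-- `U` is bounded in the relation `A`. -/
def Bounded (A : TRel) (U : Set A.dom) : Prop :=
  ∃ y : A.rng, ∀ x ∈ U, A.rel x y

/-- The cofinality of a relation: the least cardinality of a cofinal set. -/
noncomputable def cofin (A : TRel) : Cardinal :=
  sInf {c | ∃ C : Set A.rng, A.Cofinal C ∧ Cardinal.mk C = c}

/-- The additivity of a relation: the least cardinality of an unbounded set. -/
noncomputable def addit (A : TRel) : Cardinal :=
  sInf {c | ∃ U : Set A.dom, ¬A.Bounded U ∧ Cardinal.mk U = c}

/-- A relation has calibre `(κ, lam)` if every κ-sized subset of the domain has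
a lam-sized subset which is bounded. -/
def Calibre (A : TRel) (κ lam : Cardinal) : Prop :=
  ∀ S : Set A.dom, Cardinal.mk S = κ → ∃ T ⊆ S, Cardinal.mk T = lam ∧ A.Bounded T

/-- The product of two relations. -/
def prod (A : TRel.{u, v}) (B : TRel.{u', v'}) : TRel :=
  ⟨A.dom × B.dom, A.rng × B.rng, fun x y => A.rel x.1 y.1 ∧ B.rel x.2 y.2⟩

/-- `A & B`, read `A with B`. -/
def with' (A : TRel.{u, v}) (B : TRel.{u', v'}) : TRel :=
  ⟨A.dom ⊕ B.dom, A.rng × B.rng,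
    fun x y => Sum.elim (fun a => A.rel a y.1) (fun b => B.rel b y.2) x⟩

/-- The sum `A + B` of two relations. -/
def add (A : TRel.{u, v}) (B : TRel.{u', v'}) : TRel :=
  ⟨A.dom ⊕ B.dom, A.rng ⊕ B.rng,
    fun x y =>
      match x, y with
      | Sum.inl a, Sum.inl b => A.rel a b
      | Sum.inr a, Sum.inr b => B.rel a b
      | _, _ => False⟩

/-- The sum of a family of relations. -/
def sigmaSum {ι : Type*} (A : ι → TRel.{u, v}) : TRel :=
  ⟨Σ i, (A i).dom, Σ i, (A i).rng,
    fun x y => ∃ (i : ι) (a : (A i).dom) (b : (A i).rng),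
      x = ⟨i, a⟩ ∧ y = ⟨i, b⟩ ∧ (A i).rel a b⟩

end TRel

/-- `f ≤* g`: eventual domination. -/
def leStar (f g : ℕ → ℕ) : Prop := {n | ¬f n ≤ g n}.Finite

/-- `f ≤_∞ g`: `f n ≤ g n` for infinitely many `n`. -/
def leInf (f g : ℕ → ℕ) : Prop := {n | f n ≤ g n}.Infinite

/-- The relation `(ℕ → ℕ, ≤*)`. -/
def leStarRel : TRel := ⟨ℕ → ℕ, ℕ → ℕ, leStar⟩

/-- The relation `(ℕ → ℕ, ≤_∞)`. -/
def leInfRel : TRel := ⟨ℕ → ℕ, ℕ → ℕ, leInf⟩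

/-- The relation `ω = (ℕ, ℕ, ≤)`. -/
def omegaRel : TRel := ⟨ℕ, ℕ, (· ≤ ·)⟩

/-- The Baire space `(ℕ → ℕ, ≤)` with the coordinatewise order. -/
def baireRel : TRel := ⟨ℕ → ℕ, ℕ → ℕ, (· ≤ ·)⟩

/-- The bounding number `𝔟`. -/
noncomputable def bCard : Cardinal := leStarRel.addit

/-- The dominating number `𝔡`. -/
noncomputable def dCard : Cardinal := leStarRel.cofin

section Topology

variable (X : Type u) [TopologicalSpace X]

/-- The infinite convergent sequences with their limit: images of embeddings of `ω + 1`. -/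
def CSplus : Set (Set X) :=
  {S | ∃ e : OnePoint ℕ → X, Topology.IsEmbedding e ∧ S = Set.range e}

/-- The infinite convergent sequences without their limit. -/
def CS : Set (Set X) :=
  {S | ∃ e : OnePoint ℕ → X, Topology.IsEmbedding e ∧
    S = e '' Set.range ((↑) : ℕ → OnePoint ℕ)}

/-- The infinite convergent sequences converging to `x`, without the limit `x`. -/
def CSpt {X : Type u} [TopologicalSpace X] (x : X) : Set (Set X) :=
  {S | ∃ e : OnePoint ℕ → X, Topology.IsEmbedding e ∧ e OnePoint.infty = x ∧
    S = e '' Set.range ((↑) : ℕ → OnePoint ℕ)}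

/-- The non-closed subsets of `X`. -/
def NC : Set (Set X) := {F | ¬IsClosed F}

/-- `S ̸⊥ T` : `S ∩ T` is not closed in the subspace `T`. -/
def NotClosedIn {X : Type u} [TopologicalSpace X] (S T : Set X) : Prop :=
  ¬∃ C : Set X, IsClosed C ∧ S ∩ T = C ∩ T

/-- The k-structure `𝐤(X) = (CS(X), K(X), ̸⊥)`. -/
def kRel : TRel :=
  ⟨↥(CS X), {K : Set X // IsCompact K}, fun S K => NotClosedIn S.1 K.1⟩

/-- The compact-cover structure `𝐤𝐜(X) = (X, K(X), ∈)`. -/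
def kcRel : TRel :=
  ⟨X, {K : Set X // IsCompact K}, fun x K => x ∈ K.1⟩

/-- The sequential structure `𝐬𝐞𝐪(X) = (CS(X), CS(X), ii)`. -/
def seqRel : TRel :=
  ⟨↥(CS X), ↥(CS X), fun S T => (S.1 ∩ T.1).Infinite⟩

/-- The relation `𝐬𝐞𝐪(x, X) = (CS(x,X), CS(x,X), ii)`. -/
def seqPtRel {X : Type u} [TopologicalSpace X] (x : X) : TRel :=
  ⟨↥(CSpt x), ↥(CSpt x), fun S T => (S.1 ∩ T.1).Infinite⟩

/-- The set `X′` of non-isolated points of `X`. -/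
def nonIsolated : Set X := {x | ¬IsOpen ({x} : Set X)}

/-- The set `X^#` of points of `X` with no compact neighborhood. -/
def nonLC : Set X := {x | ¬∃ K : Set X, IsCompact K ∧ K ∈ nhds x}

end Topology

/-- The relation `P(κ) = ((([κ]^{<ω})^ω)_∞, i_∞)`. -/
def Prel (κ : Cardinal.{u}) : TRel :=
  ⟨{F : ℕ → Finset κ.out // {n | F n ≠ ∅}.Infinite},
   {F : ℕ → Finset κ.out // {n | F n ≠ ∅}.Infinite},
   fun F G => {n | ∃ x, x ∈ F.1 n ∧ x ∈ G.1 n}.Infinite⟩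

/-- The relation `((∏_n [κ_n]^{<ω})_∞, i_∞)` for a sequence of cardinals `κ_n = c n`. -/
def Qrel (c : ℕ → Cardinal.{u}) : TRel :=
  ⟨{F : (n : ℕ) → Finset (c n).out // {n | F n ≠ ∅}.Infinite},
   {F : (n : ℕ) → Finset (c n).out // {n | F n ≠ ∅}.Infinite},
   fun F G => {n | ∃ x, x ∈ F.1 n ∧ x ∈ G.1 n}.Infinite⟩

/-- The relation `(κ, =)` for a cardinal `κ`. -/
def eqCardRel (κ : Cardinal.{u}) : TRel := ⟨κ.out, κ.out, Eq⟩

/-- The relation `(Λ, =)` for a set `Λ`. -/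
def eqSetRel {X : Type u} (A : Set X) : TRel := ⟨↥A, ↥A, Eq⟩

/-- The relation `S(κ) = Σ_n P(κ_n) × (κ_n, =)` for a sequence of cardinals `κ_n = c n`. -/
def Srel (c : ℕ → Cardinal.{u}) : TRel :=
  TRel.sigmaSum fun n => (Prel (c n)).prod (eqCardRel (c n))

/-- The relation `𝟎` with empty domain and range. -/
def zeroRel : TRel := ⟨PEmpty, PEmpty, fun _ _ => False⟩

noncomputable section KTAuxSec
namespace KTAux
open Set Topology Filter Metric TopologicalSpace Function Classical

/-! ### Basics -/

def Sig (b : ℕ → ℕ) : Set (ℕ → ℕ) := Set.pi Set.univ fun i => Set.Iic (b i)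

lemma mem_Sig {b h : ℕ → ℕ} : h ∈ Sig b ↔ ∀ i, h i ≤ b i := by
  simp [Sig, Pi.le_def]

lemma isCompact_Sig (b : ℕ → ℕ) : IsCompact (Sig b) :=
  isCompact_univ_pi fun i => (Set.finite_Iic (b i)).isCompact

lemma Sig_mono {b b' : ℕ → ℕ} (h : b ≤ b') : Sig b ⊆ Sig b' := fun x hx =>
  mem_Sig.2 fun i => (mem_Sig.1 hx i).trans (h i)

variable {M : Type u} [MetricSpace M]

/-- `Y` is contained in a σ-compact subset. -/
def Light (Y : Set M) : Prop :=
  ∃ D : ℕ → Set M, (∀ n, IsCompact (D n)) ∧ Y ⊆ ⋃ n, D n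

lemma Light.mono {Y Z : Set M} (h : Y ⊆ Z) (hZ : Light Z) : Light Y := by
  obtain ⟨D, hD, hsub⟩ := hZ
  exact ⟨D, hD, h.trans hsub⟩

lemma light_of_isCompact {K : Set M} (h : IsCompact K) : Light K :=
  ⟨fun _ => K, fun _ => h, by intro x hx; exact mem_iUnion.2 ⟨0, hx⟩⟩

lemma light_empty : Light (∅ : Set M) :=
  (light_of_isCompact isCompact_empty).mono (by rfl)

lemma light_iUnion {Y : ℕ → Set M} (h : ∀ n, Light (Y n)) : Light (⋃ n, Y n) := by
  choose D hD hsub using h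
  refine ⟨fun m => D (Nat.unpair m).1 (Nat.unpair m).2, fun m => hD _ _, ?_⟩
  intro y hy
  obtain ⟨n, hn⟩ := mem_iUnion.1 hy
  obtain ⟨k, hk⟩ := mem_iUnion.1 (hsub n hn)
  exact mem_iUnion.2 ⟨Nat.pair n k, by simpa [Nat.unpair_pair] using hk⟩

lemma nonempty_of_not_light {Y : Set M} (h : ¬ Light Y) : Y.Nonempty := by
  rcases Y.eq_empty_or_nonempty with rfl | hY
  · exact absurd light_empty h
  · exact hY

/-! ### Part (3): `baireRel ≥ kcRel M` -/

lemma part3 (f : (ℕ → ℕ) → M) (hf : Continuous f) (hfs : Surjective f) :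
    baireRel.Tukey (kcRel M) := by
  refine ⟨fun x => (hfs x).choose,
    fun γ => ⟨f '' Sig γ, (isCompact_Sig γ).image hf⟩, ?_⟩
  intro x γ hle
  exact ⟨(hfs x).choose, mem_Sig.2 fun i => hle i, (hfs x).choose_spec⟩

/-! ### Part (2) machinery -/

/-- interleaving -/
def evPart (γ : ℕ → ℕ) : ℕ → ℕ := fun i => γ (2 * i)
def odPart (γ : ℕ → ℕ) : ℕ → ℕ := fun i => γ (2 * i + 1)
def pairSeq (g e : ℕ → ℕ) : ℕ → ℕ := fun n =>
  if n % 2 = 0 then g (n / 2) else e (n / 2)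

lemma evPart_pairSeq_le {g e γ : ℕ → ℕ} (h : pairSeq g e ≤ γ) : g ≤ evPart γ := by
  intro i
  have := h (2 * i)
  simpa [pairSeq, evPart, Nat.mul_div_cancel_left, Nat.mul_mod_right] using this

lemma odPart_pairSeq_le {g e γ : ℕ → ℕ} (h : pairSeq g e ≤ γ) : e ≤ odPart γ := by
  intro i
  have := h (2 * i + 1)
  have h1 : (2 * i + 1) % 2 = 1 := by omega
  have h2 : (2 * i + 1) / 2 = i := by omega
  simpa [pairSeq, odPart, h1, h2] using this

/-- `mIdx e k` : least `j` with `k ≤ max (e j) j`. -/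
def mIdx (e : ℕ → ℕ) (k : ℕ) : ℕ :=
  Nat.find (⟨k, le_max_right _ _⟩ : ∃ j, k ≤ max (e j) j)

lemma mIdx_le {e : ℕ → ℕ} {k j : ℕ} (h : k ≤ max (e j) j) : mIdx e k ≤ j :=
  Nat.find_min' _ h

lemma mIdx_spec (e : ℕ → ℕ) (k : ℕ) : k ≤ max (e (mIdx e k)) (mIdx e k) :=
  Nat.find_spec (⟨k, le_max_right _ _⟩ : ∃ j, k ≤ max (e j) j)

lemma mIdx_anti {e e' : ℕ → ℕ} (h : e ≤ e') (k : ℕ) : mIdx e' k ≤ mIdx e k :=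
  mIdx_le ((mIdx_spec e k).trans (max_le_max (h _) le_rfl))

lemma mIdx_large (e : ℕ → ℕ) (J : ℕ) :
    ∃ K, ∀ k, K ≤ k → J ≤ mIdx e k := by
  refine ⟨(Finset.range J).sup (fun j => max (e j) j) + 1, fun k hk => ?_⟩
  rw [mIdx, Nat.le_find_iff]
  intro m hm hP
  have : max (e m) m ≤ (Finset.range J).sup (fun j => max (e j) j) :=
    Finset.le_sup (f := fun j => max (e j) j) (Finset.mem_range.2 hm)
  omega

variable (f : (ℕ → ℕ) → M)

def Pg (g : ℕ → ℕ) : Set M := f '' Sig g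

/-- the compact catching sets -/
def AA (g e : ℕ → ℕ) : Set M :=
  Pg f g ∪ ⋃ k, (f '' Sig (fun i => g i + k)) ∩
    cthickening ((2⁻¹ : ℝ) ^ (mIdx e k)) (Pg f g)

lemma isCompact_AA (hf : Continuous f) (g e : ℕ → ℕ) : IsCompact (AA f g e) := by
  have hP : IsCompact (Pg f g) := (isCompact_Sig g).image hf
  have hB : ∀ k : ℕ, IsCompact ((f '' Sig (fun i => g i + k)) ∩
      cthickening ((2⁻¹ : ℝ) ^ (mIdx e k)) (Pg f g)) := fun k =>
    ((isCompact_Sig _).image hf).inter_right isClosed_cthickening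
  apply isCompact_of_finite_subcover
  intro ι U hU hcov
  have hPU : Pg f g ⊆ ⋃ i, U i := (subset_union_left.trans hcov)
  obtain ⟨t₀, ht₀⟩ := hP.elim_finite_subcover U hU hPU
  have hVopen : IsOpen (⋃ i ∈ t₀, U i) := isOpen_biUnion fun i _ => hU i
  obtain ⟨δ, hδ, hth⟩ := hP.exists_thickening_subset_open hVopen ht₀
  obtain ⟨J, hJ⟩ := exists_pow_lt_of_lt_one hδ (by norm_num : (2⁻¹ : ℝ) < 1)
  obtain ⟨K, hK⟩ := mIdx_large e J
  have hBK : ∀ k, K ≤ k → (f '' Sig (fun i => g i + k)) ∩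
      cthickening ((2⁻¹ : ℝ) ^ (mIdx e k)) (Pg f g) ⊆ ⋃ i ∈ t₀, U i := by
    intro k hk
    refine (inter_subset_right.trans ?_).trans hth
    refine cthickening_subset_thickening' hδ ?_ _
    calc (2⁻¹ : ℝ) ^ (mIdx e k) ≤ (2⁻¹ : ℝ) ^ J :=
          pow_le_pow_of_le_one (by norm_num) (by norm_num) (hK k hk)
      _ < δ := hJ
  have hC : IsCompact (⋃ k ∈ Finset.range K, (f '' Sig (fun i => g i + k)) ∩
      cthickening ((2⁻¹ : ℝ) ^ (mIdx e k)) (Pg f g)) :=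
    (Finset.range K).finite_toSet.isCompact_biUnion fun k _ => hB k
  obtain ⟨t₁, ht₁⟩ := hC.elim_finite_subcover U hU (by
    refine subset_trans ?_ hcov
    intro y hy
    obtain ⟨k, hk⟩ := mem_iUnion.1 hy
    simp only [mem_iUnion, exists_prop] at hk
    exact subset_union_right (mem_iUnion.2 ⟨k, hk.2⟩))
  refine ⟨t₀ ∪ t₁, ?_⟩
  intro y hy
  have hsub : ∀ i ∈ t₀, U i ⊆ ⋃ j ∈ t₀ ∪ t₁, U j := fun i hi =>
    subset_iUnion₂_of_subset i (Finset.mem_union_left _ hi) (le_refl _)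
  rcases hy with hy | hy
  · obtain ⟨i, hi, hyi⟩ := mem_iUnion₂.1 (ht₀ hy)
    exact hsub i hi hyi
  · obtain ⟨k, hk⟩ := mem_iUnion.1 hy
    by_cases hkK : K ≤ k
    · obtain ⟨i, hi, hyi⟩ := mem_iUnion₂.1 (hBK k hkK hk)
      exact hsub i hi hyi
    · have : y ∈ ⋃ k ∈ Finset.range K, (f '' Sig (fun i => g i + k)) ∩
          cthickening ((2⁻¹ : ℝ) ^ (mIdx e k)) (Pg f g) :=
        mem_iUnion₂.2 ⟨k, Finset.mem_range.2 (by omega), hk⟩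
      obtain ⟨i, hi, hyi⟩ := mem_iUnion₂.1 (ht₁ this)
      exact subset_iUnion₂_of_subset i (Finset.mem_union_right _ hi) (le_refl _) hyi

end KTAux
end KTAuxSec
noncomputable section KTAuxSec2
namespace KTAux
open Set Topology Filter Metric TopologicalSpace Function Classical

lemma tendsto_coe_onePoint :
    Tendsto (fun n : ℕ => (n : OnePoint ℕ)) atTop (𝓝 (OnePoint.infty)) := by
  have h := (OnePoint.continuous_iff (f := (id : OnePoint ℕ → OnePoint ℕ))).1 continuous_id
  have h1 := h.1
  rwa [coclosedCompact_eq_cocompact, cocompact_eq_cofinite, Nat.cofinite_eq_atTop] at h1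

variable {M : Type u} [MetricSpace M] (f : (ℕ → ℕ) → M)

lemma catch_exists (hf : Continuous f) (hfs : Surjective f) (S : Set M)
    (hS : S ∈ CS M) :
    ∃ w : ℕ → ℕ, ∀ γ : ℕ → ℕ, w ≤ γ → NotClosedIn S (AA f (evPart γ) (odPart γ)) := by
  obtain ⟨eS, hemb, hSeq⟩ := hS
  set s : ℕ → M := fun n => eS n with hs_def
  set x : M := eS OnePoint.infty with hx_def
  have hconv : Tendsto s atTop (𝓝 x) :=
    (hemb.continuous.tendsto _).comp tendsto_coe_onePoint
  have hsnex : ∀ n, s n ≠ x := by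
    intro n h
    exact OnePoint.coe_ne_infty n (hemb.injective h)
  have hxS : x ∉ S := by
    rw [hSeq]
    rintro ⟨o, ⟨n, rfl⟩, ho⟩
    exact OnePoint.coe_ne_infty n (hemb.injective ho)
  have hsS : ∀ n, s n ∈ S := fun n => by
    rw [hSeq]; exact ⟨n, ⟨n, rfl⟩, rfl⟩
  -- preimages
  set hfn : ℕ → ℕ → ℕ := fun n => (hfs (s n)).choose with hfn_def
  have hfn_spec : ∀ n, f (hfn n) = s n := fun n => (hfs (s n)).choose_spec
  set u : ℕ → ℕ := (hfs x).choose with hu_def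
  have hu_spec : f u = x := (hfs x).choose_spec
  set g0 : ℕ → ℕ := fun i => max (u i) ((Finset.range (i + 1)).sup fun n => hfn n i)
    with hg0_def
  set Kn : ℕ → ℕ := fun n => (Finset.range n).sup fun i => hfn n i with hKn_def
  have hKn : ∀ n i, hfn n i ≤ g0 i + Kn n := by
    intro n i
    rcases lt_or_ge i n with h | h
    · have : hfn n i ≤ Kn n := Finset.le_sup (f := fun i => hfn n i) (Finset.mem_range.2 h)
      omega
    · have h1 : hfn n i ≤ (Finset.range (i + 1)).sup fun n => hfn n i :=
        Finset.le_sup (f := fun n => hfn n i) (Finset.mem_range.2 (by omega))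
      have : hfn n i ≤ g0 i := h1.trans (le_max_right _ _)
      omega
  -- distances
  set dn : ℕ → ℝ := fun n => dist (s n) x with hdn_def
  have hd0 : ∀ n, 0 < dn n := fun n => dist_pos.2 (hsnex n)
  have hdto : Tendsto dn atTop (𝓝 0) := by
    have := hconv.dist (tendsto_const_nhds (x := x))
    simpa using this
  have hsmall : ∀ ε : ℝ, 0 < ε → ∃ N, ∀ n, N ≤ n → dn n ≤ ε := by
    intro ε hε
    obtain ⟨N, hN⟩ := Metric.tendsto_atTop.1 hdto ε hε
    refine ⟨N, fun n hn => ?_⟩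
    have := hN n hn
    rw [Real.dist_eq, sub_zero, abs_of_nonneg dist_nonneg] at this
    exact this.le
  obtain ⟨N₀, hN₀⟩ := hsmall 1 one_pos
  set cn : ℕ → ℕ := fun n => Nat.findGreatest (fun c => dn n ≤ (2⁻¹ : ℝ) ^ c) n
    with hcn_def
  have hcn_spec : ∀ n, N₀ ≤ n → dn n ≤ (2⁻¹ : ℝ) ^ (cn n) := by
    intro n h
    exact Nat.findGreatest_spec (P := fun c => dn n ≤ (2⁻¹ : ℝ) ^ c) (Nat.zero_le n)
      (by simpa using hN₀ n h)
  have hcn_big : ∀ J, ∃ N, ∀ n, N ≤ n → J ≤ cn n := by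
    intro J
    obtain ⟨N, hN⟩ := hsmall ((2⁻¹ : ℝ) ^ J) (pow_pos (by norm_num) J)
    refine ⟨max N J, fun n hn => ?_⟩
    exact Nat.le_findGreatest (P := fun c => dn n ≤ (2⁻¹ : ℝ) ^ c)
      (le_trans (le_max_right _ _) hn) (hN n (le_trans (le_max_left _ _) hn))
  choose NJ hNJ using fun j => hcn_big (j + 1)
  set e0 : ℕ → ℕ := fun j => (Finset.range (NJ j)).sup fun n => Kn n with he0_def
  have he0 : ∀ n, Kn n ≤ e0 (cn n) := by
    intro n
    have hlt : n < NJ (cn n) := by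
      by_contra h
      have := hNJ (cn n) n (by omega)
      omega
    exact Finset.le_sup (f := fun n => Kn n) (Finset.mem_range.2 hlt)
  refine ⟨pairSeq g0 e0, ?_⟩
  intro γ hγ
  set g := evPart γ with hg_def
  set e := odPart γ with he_def
  have hg : g0 ≤ g := evPart_pairSeq_le hγ
  have he : e0 ≤ e := odPart_pairSeq_le hγ
  have hx_mem : x ∈ Pg f g :=
    ⟨u, mem_Sig.2 fun i => le_trans (le_trans (le_max_left _ _) (le_refl (g0 i))) (hg i),
      hu_spec⟩
  have hcatch : ∀ n, N₀ ≤ n → s n ∈ AA f g e := by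
    intro n hn
    refine Or.inr (mem_iUnion.2 ⟨Kn n, ⟨⟨hfn n, mem_Sig.2 fun i =>
      le_trans (hKn n i) (Nat.add_le_add_right (hg i) _), hfn_spec n⟩, ?_⟩⟩)
    refine Metric.mem_cthickening_of_dist_le (s n) x _ _ hx_mem ?_
    have h1 : mIdx e (Kn n) ≤ cn n := by
      refine mIdx_le (le_trans (le_trans (he0 n) (he (cn n))) (le_max_left _ _))
    calc dn n ≤ (2⁻¹ : ℝ) ^ (cn n) := hcn_spec n hn
      _ ≤ (2⁻¹ : ℝ) ^ (mIdx e (Kn n)) :=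
          pow_le_pow_of_le_one (by norm_num) (by norm_num) h1
  rintro ⟨C, hC, hCeq⟩
  have hsC : ∀ n, N₀ ≤ n → s n ∈ C := by
    intro n hn
    have h1 : s n ∈ S ∩ AA f g e := ⟨hsS n, hcatch n hn⟩
    rw [hCeq] at h1
    exact h1.1
  have hxC : x ∈ C := hC.mem_of_tendsto hconv (eventually_atTop.2 ⟨N₀, hsC⟩)
  have : x ∈ S ∩ AA f g e := by
    rw [hCeq]; exact ⟨hxC, Or.inl hx_mem⟩
  exact hxS this.1

lemma part2 (hf : Continuous f) (hfs : Surjective f) :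
    baireRel.Tukey (kRel M) := by
  choose w hw using fun S : ↥(CS M) => catch_exists f hf hfs S.1 S.2
  exact ⟨w, fun γ => ⟨AA f (evPart γ) (odPart γ), isCompact_AA f hf _ _⟩,
    fun S γ h => hw S γ h⟩

end KTAux
end KTAuxSec2
noncomputable section KTAuxSec3
namespace KTAux
open Set Topology Filter Metric TopologicalSpace Function Classical

def Hcube : Type := ℕ → Icc (0:ℝ) 1

instance : TopologicalSpace Hcube :=
  inferInstanceAs (TopologicalSpace (ℕ → Icc (0:ℝ) 1))
instance : CompactSpace Hcube :=
  inferInstanceAs (CompactSpace (ℕ → Icc (0:ℝ) 1))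
instance : SecondCountableTopology Hcube :=
  inferInstanceAs (SecondCountableTopology (ℕ → Icc (0:ℝ) 1))
instance : MetrizableSpace Hcube :=
  inferInstanceAs (MetrizableSpace (ℕ → Icc (0:ℝ) 1))
instance : MetricSpace Hcube := TopologicalSpace.metrizableSpaceMetric Hcube

lemma continuous_evalH (n : ℕ) : Continuous fun u : Hcube => u n :=
  continuous_apply (A := fun _ : ℕ => Icc (0:ℝ) 1) n

variable {M : Type u} [MetricSpace M]

def jmap (q : ℕ → M) : M → Hcube := fun y n =>
  ⟨min 1 (dist y (q n)), ⟨le_min zero_le_one dist_nonneg, min_le_left _ _⟩⟩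

lemma jmap_cont (q : ℕ → M) : Continuous (jmap q) := by
  refine continuous_pi fun n => Continuous.subtype_mk ?_ _
  exact continuous_const.min (continuous_id.dist continuous_const)

lemma jmap_inj {q : ℕ → M} (hq : DenseRange q) : Injective (jmap q) := by
  intro y y' h
  by_contra hne
  have hd : 0 < dist y y' := dist_pos.2 hne
  set ε := min (dist y y') 1 with hε_def
  have hε0 : 0 < ε := lt_min hd one_pos
  have hε1 : ε ≤ 1 := min_le_right _ _
  have hεd : ε ≤ dist y y' := min_le_left _ _
  obtain ⟨n, hn⟩ := hq.exists_dist_lt y (show (0:ℝ) < ε/4 by linarith)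
  have hcoord : min 1 (dist y (q n)) = min 1 (dist y' (q n)) := by
    have := congrArg (fun u : Hcube => (u n : ℝ)) h
    exact this
  have h1 : min 1 (dist y (q n)) = dist y (q n) :=
    min_eq_right (by linarith)
  have h2 : dist y' (q n) ≥ 3*ε/4 := by
    have := dist_triangle y' y (q n)
    have h3 : dist y' (q n) ≥ dist y y' - dist y (q n) := by
      have := dist_triangle y y' (q n)
      have hc : dist y' (q n) = dist (q n) y' := dist_comm _ _
      nlinarith [dist_triangle y y' (q n), dist_comm y y', dist_comm y' (q n),
        dist_triangle y (q n) y']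
    linarith
  have h4 : min 1 (dist y' (q n)) ≥ 3*ε/4 := le_min (by linarith) h2
  rw [h1] at hcoord
  linarith [hcoord ▸ hn]

lemma jmap_inducing {q : ℕ → M} (hq : DenseRange q) : IsInducing (jmap q) := by
  rw [isInducing_iff_nhds]
  intro y
  refine le_antisymm (((jmap_cont q).tendsto y).le_comap) ?_
  rw [(Metric.nhds_basis_ball (x := y)).ge_iff]
  intro ε hε
  set ε' := min ε 1 with hε'_def
  have hε'0 : 0 < ε' := lt_min hε one_pos
  have hε'1 : ε' ≤ 1 := min_le_right _ _
  obtain ⟨n, hn⟩ := hq.exists_dist_lt y (show (0:ℝ) < ε'/4 by linarith)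
  refine mem_comap.2 ⟨(fun u : Hcube => u n) ⁻¹' (Metric.ball (jmap q y n) (ε'/4)),
    (continuous_evalH n).continuousAt.preimage_mem_nhds
      (Metric.ball_mem_nhds _ (by linarith)), ?_⟩
  intro y' hy'
  simp only [mem_preimage, Metric.mem_ball, Subtype.dist_eq, Real.dist_eq] at hy'
  have hcy : (jmap q y n : ℝ) = min 1 (dist y (q n)) := rfl
  have hcy' : (jmap q y' n : ℝ) = min 1 (dist y' (q n)) := rfl
  rw [hcy, hcy'] at hy'
  have h1 : min 1 (dist y (q n)) = dist y (q n) := min_eq_right (by linarith)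
  rw [h1] at hy'
  have h2 : min 1 (dist y' (q n)) < ε'/2 := by
    have := abs_lt.1 hy'
    linarith
  have h3 : dist y' (q n) < ε'/2 := by
    by_cases hb : dist y' (q n) < 1
    · rwa [min_eq_right hb.le] at h2
    · exfalso
      rw [min_eq_left (by linarith)] at h2
      linarith
  have : dist y' y < ε' := by
    have := dist_triangle y' (q n) y
    have hc : dist (q n) y = dist y (q n) := dist_comm _ _
    linarith
  have : dist y' y < ε := lt_of_lt_of_le this (min_le_left _ _)
  exact Metric.mem_ball.2 this

lemma jmap_embedding {q : ℕ → M} (hq : DenseRange q) : IsEmbedding (jmap q) :=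
  ⟨jmap_inducing hq, jmap_inj hq⟩

end KTAux
end KTAuxSec3
noncomputable section KTAuxSec4
namespace KTAux
open Set Topology Filter Metric TopologicalSpace Function Classical

/-! ### Cylinders -/

def cyl (t : List ℕ) : Set (ℕ → ℕ) := {h | ∀ i, i < t.length → h i = t.getD i 0}

lemma cyl_nil : cyl [] = univ := by
  ext h; simp [cyl]

lemma prefix_getD {t t' : List ℕ} (h : t <+: t') {i : ℕ} (hi : i < t.length) :
    t'.getD i 0 = t.getD i 0 := by
  have hlen : t.length ≤ t'.length := h.length_le
  rw [List.getD_eq_getElem _ _ (lt_of_lt_of_le hi hlen), List.getD_eq_getElem _ _ hi]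
  exact (h.getElem hi).symm

lemma cyl_prefix {t t' : List ℕ} (h : t <+: t') : cyl t' ⊆ cyl t := by
  intro x hx i hi
  rw [← prefix_getD h hi]
  exact hx i (lt_of_lt_of_le hi h.length_le)

lemma mem_cyl_concat {t : List ℕ} {m : ℕ} {h : ℕ → ℕ} :
    h ∈ cyl (t.concat m) ↔ h ∈ cyl t ∧ h t.length = m := by
  constructor
  · intro hc
    refine ⟨cyl_prefix (by rw [List.concat_eq_append]; exact ⟨[m], rfl⟩) hc, ?_⟩
    have := hc t.length (by simp [List.concat_eq_append])
    simpa [List.concat_eq_append] using this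
  · rintro ⟨h1, h2⟩
    intro i hi
    rw [List.concat_eq_append] at hi ⊢
    simp only [List.length_append, List.length_cons, List.length_nil] at hi
    rcases lt_or_ge i t.length with hlt | hge
    · rw [List.getD_append t [m] 0 i hlt]
      exact h1 i hlt
    · have : i = t.length := by omega
      subst this
      simpa using h2

lemma cyl_eq_iUnion_concat (t : List ℕ) : cyl t = ⋃ m, cyl (t.concat m) := by
  ext h
  simp only [mem_iUnion, mem_cyl_concat]
  constructor
  · intro hc
    exact ⟨h t.length, hc, rfl⟩
  · rintro ⟨m, hc, _⟩
    exact hc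

/-! ### Context -/

structure Ctx (M : Type u) [MetricSpace M] where
  f : (ℕ → ℕ) → M
  hf : Continuous f
  hfs : Surjective f
  j : M → Hcube
  hji : Injective j
  hjind : IsInducing j

variable {M : Type u} [MetricSpace M] (c : Ctx M)

lemma Ctx.hjc : Continuous c.j := c.hjind.continuous

lemma Ctx.hjemb : IsEmbedding c.j := ⟨c.hjind, c.hji⟩

/-- union of two light sets is light -/
lemma light_union {A B : Set M} (hA : Light A) (hB : Light B) : Light (A ∪ B) := by
  obtain ⟨DA, hDA, hsA⟩ := hA
  obtain ⟨DB, hDB, hsB⟩ := hB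
  refine ⟨fun n => if n % 2 = 0 then DA (n / 2) else DB (n / 2), fun n => ?_, ?_⟩
  · dsimp only; split <;> [exact hDA _; exact hDB _]
  · rintro y (hy | hy)
    · obtain ⟨k, hk⟩ := mem_iUnion.1 (hsA hy)
      refine mem_iUnion.2 ⟨2 * k, ?_⟩
      have h1 : (2 * k) % 2 = 0 := by omega
      have h2 : (2 * k) / 2 = k := by omega
      simpa [h1, h2] using hk
    · obtain ⟨k, hk⟩ := mem_iUnion.1 (hsB hy)
      refine mem_iUnion.2 ⟨2 * k + 1, ?_⟩
      have h1 : (2 * k + 1) % 2 = 1 := by omega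
      have h2 : (2 * k + 1) / 2 = k := by omega
      simpa [h1, h2] using hk

lemma light_biUnion {ι : Type*} {s : Set ι} (hs : s.Countable) {Y : ι → Set M}
    (h : ∀ i ∈ s, Light (Y i)) : Light (⋃ i ∈ s, Y i) := by
  rcases s.eq_empty_or_nonempty with rfl | hne
  · simpa using (light_empty (M := M))
  · obtain ⟨F, hF⟩ := hs.exists_eq_range hne
    subst hF
    rw [Set.biUnion_range]
    exact light_iUnion fun n => h (F n) (mem_range_self n)

/-! ### The escape point lemma -/

lemma key_escape {Y : Set M} (hY : ¬ Light Y) :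
    ∃ z : Hcube, z ∉ range c.j ∧
      ∀ δ : ℝ, 0 < δ → ¬ Light (Y ∩ c.j ⁻¹' (Metric.ball z δ)) := by
  by_contra hcon
  push_neg at hcon
  set W : Set Hcube := {z | ∀ δ : ℝ, 0 < δ → ¬ Light (Y ∩ c.j ⁻¹' (Metric.ball z δ))}
    with hW_def
  have hWj : W ⊆ range c.j := by
    intro z hz
    by_contra h
    obtain ⟨δ, hδ, hl⟩ := hcon z h
    exact hz δ hδ hl
  obtain ⟨B, hBc, _, hBbasis⟩ := exists_countable_basis Hcube
  set I : Set (Set Hcube) := {b | b ∈ B ∧ Light (Y ∩ c.j ⁻¹' b)} with hI_def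
  have hIc : I.Countable := hBc.mono fun b hb => hb.1
  have hcover : ∀ z, z ∉ W → ∃ b ∈ I, z ∈ b := by
    intro z hz
    simp only [hW_def, mem_setOf_eq, not_forall] at hz
    obtain ⟨δ, hδ, hl⟩ := hz
    rw [not_not] at hl
    obtain ⟨b, hbB, hzb, hbsub⟩ := hBbasis.exists_subset_of_mem_open
      (Metric.mem_ball_self hδ) Metric.isOpen_ball
    exact ⟨b, ⟨hbB, hl.mono (inter_subset_inter_right _ (preimage_mono hbsub))⟩, hzb⟩
  have hWclosed : IsClosed W := by
    rw [← isOpen_compl_iff, Metric.isOpen_iff]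
    intro z hz
    simp only [mem_compl_iff, hW_def, mem_setOf_eq, not_forall] at hz
    obtain ⟨δ, hδ, hl⟩ := hz
    rw [not_not] at hl
    refine ⟨δ / 2, by linarith, ?_⟩
    intro z' hz'
    simp only [mem_compl_iff, hW_def, mem_setOf_eq, not_forall]
    refine ⟨δ / 2, by linarith, not_not.2 (hl.mono ?_)⟩
    refine inter_subset_inter_right _ (preimage_mono ?_)
    refine Metric.ball_subset_ball' ?_
    have := Metric.mem_ball.1 hz'
    linarith [this]
  have hWcompact : IsCompact W := hWclosed.isCompact
  have himg : c.j '' (c.j ⁻¹' W) = W := by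
    rw [image_preimage_eq_inter_range, inter_eq_self_of_subset_left hWj]
  have hpre : IsCompact (c.j ⁻¹' W) := by
    rw [c.hjemb.isCompact_iff, himg]
    exact hWcompact
  have hlight1 : Light (Y ∩ c.j ⁻¹' W) :=
    (light_of_isCompact hpre).mono inter_subset_right
  have hlight2 : Light (⋃ b ∈ I, (Y ∩ c.j ⁻¹' b)) :=
    light_biUnion hIc fun b hb => hb.2
  apply hY
  refine (light_union hlight1 hlight2).mono ?_
  intro y hy
  by_cases h : c.j y ∈ W
  · exact Or.inl ⟨hy, h⟩
  · obtain ⟨b, hbI, hzb⟩ := hcover _ h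
    exact Or.inr (mem_biUnion hbI ⟨hy, hzb⟩)

/-! ### The descent lemma -/

lemma descent {t : List ℕ} {z : Hcube} {δ : ℝ} (hδ : 0 < δ)
    (hh : ¬ Light (c.f '' cyl t ∩ c.j ⁻¹' (Metric.ball z δ))) :
    ∃ y : M, c.j y ∈ Metric.closedBall z δ ∧ ∀ ρ : ℝ, 0 < ρ →
      ∃ t' : List ℕ, t <+: t' ∧ t.length < t'.length ∧
        ¬ Light (c.f '' cyl t') ∧ (c.j ∘ c.f) '' cyl t' ⊆ Metric.closedBall (c.j y) ρ := by
  set U := Metric.ball z δ with hU_def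
  set P : List ℕ → Prop := fun l => ¬ Light (c.f '' cyl l ∩ c.j ⁻¹' U) with hP_def
  have hstep : ∀ l, P l → ∃ m, P (l.concat m) := by
    intro l hl
    by_contra hcon
    push_neg at hcon
    apply hl
    have heq : c.f '' cyl l ∩ c.j ⁻¹' U
        = ⋃ m, (c.f '' cyl (l.concat m) ∩ c.j ⁻¹' U) := by
      rw [cyl_eq_iUnion_concat l, image_iUnion, iUnion_inter]
    show Light _
    rw [heq]
    exact light_iUnion fun m => not_not.1 (hcon m)
  set u : ℕ → {l : List ℕ // P l} := fun k => Nat.rec ⟨t, hh⟩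
    (fun _ prev => ⟨prev.1.concat (hstep prev.1 prev.2).choose,
      (hstep prev.1 prev.2).choose_spec⟩) k with hu_def
  have hulen : ∀ k, (u k).1.length = t.length + k := by
    intro k
    induction k with
    | zero => rfl
    | succ k ih =>
      show ((u k).1.concat _).length = _
      rw [List.length_concat, ih]
      omega
  have hupre1 : ∀ k, (u k).1 <+: (u (k + 1)).1 := by
    intro k
    show (u k).1 <+: ((u k).1.concat _)
    exact List.prefix_concat _ _
  have hupre : ∀ k k', k ≤ k' → (u k).1 <+: (u k').1 := by
    intro k k' h
    induction k' with
    | zero =>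
      have hk0 : k = 0 := by omega
      subst hk0; exact List.prefix_rfl
    | succ k' ih =>
      rcases Nat.lt_or_ge k (k' + 1) with h' | h'
      · exact (ih (by omega)).trans (hupre1 k')
      · have : k = k' + 1 := by omega
        subst this; exact List.prefix_rfl
  set hinf : ℕ → ℕ := fun i => (u (i + 1)).1.getD i 0 with hinf_def
  have hmem : ∀ k, hinf ∈ cyl (u k).1 := by
    intro k i hi
    have hiu : i < (u (i + 1)).1.length := by
      have := hulen (i + 1); omega
    have p1 := hupre k (max k (i + 1)) (le_max_left _ _)
    have p2 := hupre (i + 1) (max k (i + 1)) (le_max_right _ _)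
    show (u (i+1)).1.getD i 0 = (u k).1.getD i 0
    rw [← prefix_getD p2 hiu, ← prefix_getD p1 hi]
  have hne : ∀ k, ∃ y ∈ c.f '' cyl (u k).1, c.j y ∈ U := by
    intro k
    obtain ⟨y, hy⟩ := nonempty_of_not_light (u k).2
    exact ⟨y, hy.1, hy.2⟩
  have hcontF : ∀ ε : ℝ, 0 < ε → ∃ k,
      (c.j ∘ c.f) '' cyl (u k).1 ⊆ Metric.ball ((c.j ∘ c.f) hinf) ε := by
    intro ε hε
    have hopen : IsOpen ((c.j ∘ c.f) ⁻¹' Metric.ball ((c.j ∘ c.f) hinf) ε) :=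
      (c.hjc.comp c.hf).isOpen_preimage _ Metric.isOpen_ball
    have hmemh : hinf ∈ (c.j ∘ c.f) ⁻¹' Metric.ball ((c.j ∘ c.f) hinf) ε :=
      Metric.mem_ball_self hε
    obtain ⟨I, v, hv, hsub⟩ := isOpen_pi_iff.1 hopen hinf hmemh
    refine ⟨I.sup id + 1, ?_⟩
    rintro _ ⟨h', hh', rfl⟩
    refine hsub ?_
    intro a ha
    have ha' : a < (u (I.sup id + 1)).1.length := by
      have h1 := hulen (I.sup id + 1)
      have : a ≤ I.sup id := Finset.le_sup (f := id) ha
      omega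
    have h1 : h' a = (u (I.sup id + 1)).1.getD a 0 := hh' a ha'
    have h2 : hinf a = (u (I.sup id + 1)).1.getD a 0 := hmem (I.sup id + 1) a ha'
    rw [h1, ← h2]
    exact (hv a ha).2
  refine ⟨c.f hinf, ?_, ?_⟩
  · rw [Metric.mem_closedBall]
    refine le_of_forall_pos_lt_add ?_
    intro ε hε
    obtain ⟨k, hk⟩ := hcontF ε hε
    obtain ⟨y, hy1, hy2⟩ := hne k
    have h1 : c.j y ∈ Metric.ball ((c.j ∘ c.f) hinf) ε := by
      obtain ⟨h', hh', rfl⟩ := hy1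
      exact hk ⟨h', hh', rfl⟩
    have h2 : dist (c.j y) (c.j (c.f hinf)) < ε := Metric.mem_ball.1 h1
    have h3 : dist (c.j y) z < δ := Metric.mem_ball.1 hy2
    calc dist (c.j (c.f hinf)) z ≤ dist (c.j (c.f hinf)) (c.j y) + dist (c.j y) z :=
          dist_triangle _ _ _
      _ < ε + δ := by rw [dist_comm]; linarith
      _ = δ + ε := by ring
  · intro ρ hρ
    obtain ⟨k₀, hk₀⟩ := hcontF ρ hρ
    refine ⟨(u (max k₀ 1)).1, ?_, ?_, ?_, ?_⟩
    · exact hupre 0 (max k₀ 1) (Nat.zero_le _)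
    · have h1 := hulen (max k₀ 1)
      have h2 : 1 ≤ max k₀ 1 := le_max_right _ _
      omega
    · intro hl
      exact (u (max k₀ 1)).2 (hl.mono inter_subset_left)
    · have hsub : cyl (u (max k₀ 1)).1 ⊆ cyl (u k₀).1 :=
        cyl_prefix (hupre k₀ (max k₀ 1) (le_max_left _ _))
      exact subset_trans (Set.image_mono hsub)
        (subset_trans hk₀ Metric.ball_subset_closedBall)

end KTAux
end KTAuxSec4
noncomputable section KTAuxSec5
namespace KTAux
open Set Topology Filter Metric TopologicalSpace Function Classical

variable {M : Type u} [MetricSpace M] (c : Ctx M)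

def NodeT : Type := List ℕ × Hcube × ℝ

def Good (P : NodeT) : Prop :=
  ¬ Light (c.f '' cyl P.1) ∧
  (c.j ∘ c.f) '' cyl P.1 ⊆ Metric.closedBall P.2.1 P.2.2 ∧ 0 < P.2.2

lemma children (P : NodeT) (hP : Good c P) :
    ∃ z : Hcube, z ∉ range c.j ∧ ∃ ch : ℕ → NodeT,
      (∀ m, Good c (ch m) ∧
            P.1 <+: (ch m).1 ∧ P.1.length < (ch m).1.length ∧
            (ch m).2.2 ≤ P.2.2 / 2 ∧
            dist z (ch m).2.1 + (ch m).2.2 ≤ 1) ∧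
      (∀ m m', m < m' →
        dist z (ch m').2.1 + (ch m').2.2 ≤ (dist z (ch m).2.1 + (ch m).2.2) / 2 ∧
        Disjoint (Metric.closedBall (ch m').2.1 (ch m').2.2)
                 (Metric.closedBall (ch m).2.1 (ch m).2.2)) := by
  obtain ⟨z, hz, hzh⟩ := key_escape c hP.1
  refine ⟨z, hz, ?_⟩
  set Q : NodeT → Prop := fun n =>
    Good c n ∧ P.1 <+: n.1 ∧ P.1.length < n.1.length ∧ n.2.2 ≤ P.2.2 / 2 ∧
    (dist z n.2.1 + n.2.2 ≤ 1) ∧ n.2.2 < dist z n.2.1 with hQ_def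
  set R : NodeT → NodeT → Prop := fun a b =>
    dist z b.2.1 + b.2.2 ≤ (dist z a.2.1 + a.2.2) / 2 ∧
    Disjoint (Metric.closedBall b.2.1 b.2.2) (Metric.closedBall a.2.1 a.2.2) with hR_def
  have hstep : ∀ s : Finset NodeT, (∀ x ∈ s, Q x) → ∃ y, Q y ∧ ∀ x ∈ s, R x y := by
    intro s hs
    classical
    set L : Finset ℝ := insert 1 ((s.image fun a => dist z a.2.1 - a.2.2) ∪
      (s.image fun a => dist z a.2.1 + a.2.2)) with hL_def
    have hLne : L.Nonempty := ⟨1, Finset.mem_insert_self _ _⟩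
    set η : ℝ := L.min' hLne with hη_def
    have hη1 : η ≤ 1 := Finset.min'_le _ _ (Finset.mem_insert_self _ _)
    have hηpos : 0 < η := by
      rw [hη_def, Finset.lt_min'_iff]
      intro b hb
      rw [hL_def, Finset.mem_insert] at hb
      rcases hb with rfl | hb
      · norm_num
      · rw [Finset.mem_union] at hb
        rcases hb with hb | hb
        · obtain ⟨a, ha, rfl⟩ := Finset.mem_image.1 hb
          have := (hs a ha).2.2.2.2.2
          linarith
        · obtain ⟨a, ha, rfl⟩ := Finset.mem_image.1 hb
          have h1 := (hs a ha).1.2.2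
          have h2 := dist_nonneg (x := z) (y := a.2.1)
          linarith
    have hη_le1 : ∀ a ∈ s, η ≤ dist z a.2.1 - a.2.2 := fun a ha =>
      Finset.min'_le _ _ (Finset.mem_insert_of_mem (Finset.mem_union_left _
        (Finset.mem_image_of_mem _ ha)))
    have hη_le2 : ∀ a ∈ s, η ≤ dist z a.2.1 + a.2.2 := fun a ha =>
      Finset.min'_le _ _ (Finset.mem_insert_of_mem (Finset.mem_union_right _
        (Finset.mem_image_of_mem _ ha)))
    set δ : ℝ := min (η / 4) (P.2.2 / 4) with hδ_def
    have hδpos : 0 < δ := lt_min (by linarith) (by have := hP.2.2; linarith)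
    obtain ⟨y, hy, hdesc⟩ := descent c hδpos (hzh δ hδpos)
    have hdzy : 0 < dist z (c.j y) := dist_pos.2 fun h => hz ⟨y, h.symm⟩
    set r : ℝ := min δ (dist z (c.j y) / 2) with hr_def
    have hrpos : 0 < r := lt_min hδpos (by linarith)
    obtain ⟨t', hpre, hlen, hheavy, hsub⟩ := hdesc r hrpos
    have hdy : dist (c.j y) z ≤ δ := Metric.mem_closedBall.1 hy
    have hdy' : dist z (c.j y) ≤ δ := by rw [dist_comm]; exact hdy
    have hrδ : r ≤ δ := min_le_left _ _
    have hrd2 : r ≤ dist z (c.j y) / 2 := min_le_right _ _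
    have hδη : δ ≤ η / 4 := min_le_left _ _
    have hδP : δ ≤ P.2.2 / 4 := min_le_right _ _
    refine ⟨(t', c.j y, r), ⟨⟨hheavy, hsub, hrpos⟩, hpre, hlen, by linarith, by linarith,
      by linarith⟩, ?_⟩
    intro a ha
    constructor
    · have := hη_le2 a ha
      show dist z (c.j y) + r ≤ _
      linarith
    · rw [Set.disjoint_left]
      intro x hx hx'
      have h1 : dist x (c.j y) ≤ r := Metric.mem_closedBall.1 hx
      have h2 : dist x a.2.1 ≤ a.2.2 := Metric.mem_closedBall.1 hx'
      have h3 : dist x z ≤ dist x (c.j y) + dist (c.j y) z := dist_triangle _ _ _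
      have h4 : dist z a.2.1 ≤ dist z x + dist x a.2.1 := dist_triangle _ _ _
      have h5 : dist z x = dist x z := dist_comm _ _
      have h6 := hη_le1 a ha
      linarith
  obtain ⟨ch, h1, h2⟩ := exists_seq_of_forall_finset_exists Q R hstep
  exact ⟨ch, fun m => ⟨(h1 m).1, (h1 m).2.1, (h1 m).2.2.1, (h1 m).2.2.2.1,
    (h1 m).2.2.2.2.1⟩, fun m m' h => h2 m m' h⟩

/-! ### the scheme -/

def GoodN := {P : NodeT // Good c P}

def zOf (P : GoodN c) : Hcube := (children c P.1 P.2).choose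

lemma zOf_notin (P : GoodN c) : zOf c P ∉ range c.j :=
  (children c P.1 P.2).choose_spec.1

def chOf (P : GoodN c) : ℕ → NodeT :=
  (children c P.1 P.2).choose_spec.2.choose

lemma chOf_spec (P : GoodN c) :
    (∀ m, Good c (chOf c P m) ∧
          P.1.1 <+: (chOf c P m).1 ∧ P.1.1.length < (chOf c P m).1.length ∧
          (chOf c P m).2.2 ≤ P.1.2.2 / 2 ∧
          dist (zOf c P) (chOf c P m).2.1 + (chOf c P m).2.2 ≤ 1) ∧
      (∀ m m', m < m' →
        dist (zOf c P) (chOf c P m').2.1 + (chOf c P m').2.2 ≤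
          (dist (zOf c P) (chOf c P m).2.1 + (chOf c P m).2.2) / 2 ∧
        Disjoint (Metric.closedBall (chOf c P m').2.1 (chOf c P m').2.2)
                 (Metric.closedBall (chOf c P m).2.1 (chOf c P m).2.2)) :=
  (children c P.1 P.2).choose_spec.2.choose_spec

def stepN (P : GoodN c) (m : ℕ) : GoodN c := ⟨chOf c P m, ((chOf_spec c P).1 m).1⟩

def scheme (P₀ : GoodN c) (s : List ℕ) : GoodN c := s.foldl (stepN c) P₀

lemma scheme_concat (P₀ : GoodN c) (s : List ℕ) (m : ℕ) :
    scheme c P₀ (s.concat m) = stepN c (scheme c P₀ s) m := by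
  rw [List.concat_eq_append, scheme, List.foldl_append]
  rfl

lemma stepN_prefix (P : GoodN c) (m : ℕ) : P.1.1 <+: (stepN c P m).1.1 :=
  ((chOf_spec c P).1 m).2.1

lemma stepN_len (P : GoodN c) (m : ℕ) : P.1.1.length < (stepN c P m).1.1.length :=
  ((chOf_spec c P).1 m).2.2.1

lemma stepN_rad (P : GoodN c) (m : ℕ) : (stepN c P m).1.2.2 ≤ P.1.2.2 / 2 :=
  ((chOf_spec c P).1 m).2.2.2.1

lemma stepN_rho_one (P : GoodN c) (m : ℕ) :
    dist (zOf c P) (stepN c P m).1.2.1 + (stepN c P m).1.2.2 ≤ 1 :=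
  ((chOf_spec c P).1 m).2.2.2.2

lemma stepN_pair (P : GoodN c) {m m' : ℕ} (h : m < m') :
    dist (zOf c P) (stepN c P m').1.2.1 + (stepN c P m').1.2.2 ≤
      (dist (zOf c P) (stepN c P m).1.2.1 + (stepN c P m).1.2.2) / 2 ∧
    Disjoint (Metric.closedBall (stepN c P m').1.2.1 (stepN c P m').1.2.2)
             (Metric.closedBall (stepN c P m).1.2.1 (stepN c P m).1.2.2) :=
  (chOf_spec c P).2 m m' h

lemma stepN_rho (P : GoodN c) (m : ℕ) :
    dist (zOf c P) (stepN c P m).1.2.1 + (stepN c P m).1.2.2 ≤ (2⁻¹ : ℝ) ^ m := by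
  induction m with
  | zero => simpa using stepN_rho_one c P 0
  | succ m ih =>
    have h := (stepN_pair c P (Nat.lt_succ_self m)).1
    have hp : ((2:ℝ)⁻¹) ^ (m + 1) = ((2⁻¹:ℝ) ^ m) / 2 := by
      rw [pow_succ]; ring
    rw [hp]
    linarith

lemma stepN_ball_subset (P : GoodN c) (m : ℕ) :
    Metric.closedBall (stepN c P m).1.2.1 (stepN c P m).1.2.2 ⊆
      Metric.closedBall (zOf c P) ((2⁻¹ : ℝ) ^ m) := by
  intro x hx
  have h1 : dist x (stepN c P m).1.2.1 ≤ (stepN c P m).1.2.2 := Metric.mem_closedBall.1 hx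
  have h2 : dist x (zOf c P) ≤ dist x (stepN c P m).1.2.1 +
      dist (stepN c P m).1.2.1 (zOf c P) := dist_triangle _ _ _
  have h3 : dist (stepN c P m).1.2.1 (zOf c P) = dist (zOf c P) (stepN c P m).1.2.1 :=
    dist_comm _ _
  have h4 := stepN_rho c P m
  refine Metric.mem_closedBall.2 ?_
  linarith

/-! ### branches -/

def pre (w : ℕ → ℕ) (n : ℕ) : List ℕ := List.ofFn fun i : Fin n => w i

lemma pre_length (w : ℕ → ℕ) (n : ℕ) : (pre w n).length = n := by simp [pre]

lemma pre_succ (w : ℕ → ℕ) (n : ℕ) : pre w (n + 1) = (pre w n).concat (w n) := by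
  show List.ofFn (fun i : Fin (n + 1) => w i)
      = (List.ofFn fun i : Fin n => w i).concat (w n)
  rw [List.ofFn_succ']
  simp

lemma pre_take {w : ℕ → ℕ} {k n : ℕ} (h : k ≤ n) : (pre w n).take k = pre w k := by
  induction n with
  | zero =>
    have : k = 0 := by omega
    subst this; simp [pre]
  | succ n ih =>
    rcases Nat.lt_or_ge k (n + 1) with h' | h'
    · rw [pre_succ, List.concat_eq_append,
        List.take_append_of_le_length (by rw [pre_length]; omega)]
      exact ih (by omega)
    · have : k = n + 1 := by omega
      subst this
      exact List.take_of_length_le (by rw [pre_length])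

lemma pre_getD (w : ℕ → ℕ) (n : ℕ) : (pre w (n + 1)).getD n 0 = w n := by
  have h : n < (List.ofFn fun i : Fin (n + 1) => w i).length := by simp
  rw [pre, List.getD_eq_getElem _ _ h, List.getElem_ofFn]

lemma pre_congr {w w' : ℕ → ℕ} {n : ℕ} (h : ∀ i, i < n → w i = w' i) :
    pre w n = pre w' n := by
  unfold pre
  congr 1
  funext i
  exact h i i.2

variable (P₀ : GoodN c)

def nodeAt (w : ℕ → ℕ) (n : ℕ) : GoodN c := scheme c P₀ (pre w n)

lemma nodeAt_succ (w : ℕ → ℕ) (n : ℕ) :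
    nodeAt c P₀ w (n + 1) = stepN c (nodeAt c P₀ w n) (w n) := by
  rw [nodeAt, pre_succ, scheme_concat]
  rfl

lemma nodeAt_congr {w w' : ℕ → ℕ} {n : ℕ} (h : ∀ i, i < n → w i = w' i) :
    nodeAt c P₀ w n = nodeAt c P₀ w' n := by
  rw [nodeAt, nodeAt, pre_congr h]

lemma nodeAt_prefix (w : ℕ → ℕ) {n n' : ℕ} (h : n ≤ n') :
    (nodeAt c P₀ w n).1.1 <+: (nodeAt c P₀ w n').1.1 := by
  induction n' with
  | zero =>
    have : n = 0 := by omega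
    subst this; exact List.prefix_rfl
  | succ n' ih =>
    rcases Nat.lt_or_ge n (n' + 1) with h' | h'
    · refine (ih (by omega)).trans ?_
      rw [nodeAt_succ]
      exact stepN_prefix c _ _
    · have : n = n' + 1 := by omega
      subst this; exact List.prefix_rfl

lemma nodeAt_len (w : ℕ → ℕ) (n : ℕ) : n ≤ (nodeAt c P₀ w n).1.1.length := by
  induction n with
  | zero => exact Nat.zero_le _
  | succ n ih =>
    have h := stepN_len c (nodeAt c P₀ w n) (w n)
    rw [← nodeAt_succ] at h
    omega

lemma nodeAt_rad (w : ℕ → ℕ) (n : ℕ) :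
    (nodeAt c P₀ w n).1.2.2 ≤ P₀.1.2.2 * (2⁻¹ : ℝ) ^ n := by
  induction n with
  | zero => simp [nodeAt, pre, scheme]
  | succ n ih =>
    have h := stepN_rad c (nodeAt c P₀ w n) (w n)
    rw [← nodeAt_succ] at h
    have hp : P₀.1.2.2 * (2⁻¹:ℝ) ^ (n+1) = (P₀.1.2.2 * (2⁻¹:ℝ) ^ n) / 2 := by
      rw [pow_succ]; ring
    rw [hp]
    linarith

def branchF (w : ℕ → ℕ) : ℕ → ℕ := fun i => (nodeAt c P₀ w (i + 1)).1.1.getD i 0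

lemma branch_mem (w : ℕ → ℕ) (n : ℕ) : branchF c P₀ w ∈ cyl (nodeAt c P₀ w n).1.1 := by
  intro i hi
  have hiu : i < (nodeAt c P₀ w (i + 1)).1.1.length := by
    have := nodeAt_len c P₀ w (i + 1); omega
  have p1 := nodeAt_prefix c P₀ w (le_max_left n (i + 1))
  have p2 := nodeAt_prefix c P₀ w (le_max_right n (i + 1))
  show (nodeAt c P₀ w (i + 1)).1.1.getD i 0 = (nodeAt c P₀ w n).1.1.getD i 0
  rw [← prefix_getD p2 hiu, ← prefix_getD p1 hi]

def ptF (w : ℕ → ℕ) : M := c.f (branchF c P₀ w)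

lemma pt_mem_ball (w : ℕ → ℕ) (n : ℕ) :
    c.j (ptF c P₀ w) ∈ Metric.closedBall (nodeAt c P₀ w n).1.2.1 (nodeAt c P₀ w n).1.2.2 :=
  (nodeAt c P₀ w n).2.2.1 ⟨branchF c P₀ w, branch_mem c P₀ w n, rfl⟩

end KTAux
end KTAuxSec5
noncomputable section KTAuxSec6
namespace KTAux
open Set Topology Filter Metric TopologicalSpace Function Classical

variable {M : Type u} [MetricSpace M] (c : Ctx M) (P₀ : GoodN c)

/-! ### the tree of `K`-relevant nodes -/

def meets (K : Set M) (s : List ℕ) : Prop :=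
  (Metric.closedBall (scheme c P₀ s).1.2.1 (scheme c P₀ s).1.2.2 ∩ (c.j '' K)).Nonempty

def TKset (K : Set M) (n : ℕ) : Set (List ℕ) :=
  {s | s.length = n ∧ ∀ k, k ≤ n → meets c P₀ K (s.take k)}

lemma child_meets_finite (K : Set M) (hK : IsCompact K) (s : List ℕ) :
    {m : ℕ | meets c P₀ K (s.concat m)}.Finite := by
  set P := scheme c P₀ s with hP_def
  have hzK : zOf c P ∉ c.j '' K := fun hmem =>
    zOf_notin c P (image_subset_range _ _ hmem)
  have hKcl : IsClosed (c.j '' K) := (hK.image c.hjc).isClosed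
  obtain ⟨δ, hδ, hball⟩ := Metric.isOpen_iff.1 hKcl.isOpen_compl _ hzK
  obtain ⟨N, hN⟩ : ∃ N : ℕ, (2⁻¹ : ℝ) ^ N < δ :=
    exists_pow_lt_of_lt_one hδ (by norm_num)
  refine (Set.finite_Iio N).subset ?_
  intro m hm
  obtain ⟨x, hx1, hx2⟩ := hm
  rw [scheme_concat] at hx1
  have hxz : x ∈ Metric.closedBall (zOf c P) ((2⁻¹ : ℝ) ^ m) :=
    stepN_ball_subset c P m hx1
  have hxb : x ∉ Metric.ball (zOf c P) δ := fun h => (hball h) hx2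
  have h1 : dist x (zOf c P) ≤ (2⁻¹ : ℝ) ^ m := Metric.mem_closedBall.1 hxz
  have h2 : δ ≤ dist x (zOf c P) := not_lt.1 fun h => hxb (Metric.mem_ball.2 h)
  by_contra hmN
  simp only [mem_Iio, not_lt] at hmN
  have : (2⁻¹ : ℝ) ^ m ≤ (2⁻¹ : ℝ) ^ N :=
    pow_le_pow_of_le_one (by norm_num) (by norm_num) hmN
  linarith

lemma TKset_finite (K : Set M) (hK : IsCompact K) : ∀ n, (TKset c P₀ K n).Finite := by
  intro n
  induction n with
  | zero =>
    refine (Set.finite_singleton ([] : List ℕ)).subset ?_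
    intro s hs
    have h1 := hs.1
    rw [List.length_eq_zero_iff] at h1
    simp [h1]
  | succ n ih =>
    have hsub : TKset c P₀ K (n + 1) ⊆
        ⋃ s ∈ TKset c P₀ K n,
          (fun m => s.concat m) '' {m | meets c P₀ K (s.concat m)} := by
      intro s' hs'
      obtain ⟨hlen, hmeet⟩ := hs'
      have hlen' : n < s'.length := by omega
      have h1 : s'.take (n + 1) = s' := List.take_of_length_le (by omega)
      have h2 : s'.take (n + 1) = s'.take n ++ [s'.getD n 0] := by
        rw [List.take_succ]
        congr 1
        rw [List.getD_eq_getElem _ _ hlen']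
        simp [List.getElem?_eq_getElem hlen']
      have hconcat : s' = (s'.take n).concat (s'.getD n 0) := by
        rw [List.concat_eq_append, ← h2, h1]
      have hsmem : s'.take n ∈ TKset c P₀ K n := by
        refine ⟨by rw [List.length_take]; omega, fun k hk => ?_⟩
        rw [List.take_take, min_eq_left hk]
        exact hmeet k (by omega)
      refine mem_biUnion hsmem ?_
      refine ⟨s'.getD n 0, ?_, hconcat.symm⟩
      show meets c P₀ K ((s'.take n).concat (s'.getD n 0))
      rw [← hconcat]
      have := hmeet (n + 1) le_rfl
      rwa [h1] at this
    exact (ih.biUnion fun s _ => (child_meets_finite c P₀ K hK s).image _).subset hsub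

def PhiK (K : Set M) : ℕ → ℕ := fun n =>
  sSup ((fun s : List ℕ => s.getD n 0) '' TKset c P₀ K (n + 1))

lemma le_PhiK {K : Set M} (hK : IsCompact K) {n : ℕ} {s : List ℕ}
    (hs : s ∈ TKset c P₀ K (n + 1)) : s.getD n 0 ≤ PhiK c P₀ K n :=
  le_csSup ((TKset_finite c P₀ K hK (n + 1)).image _).bddAbove (mem_image_of_mem _ hs)

lemma mem_TKset_branch {K : Set M} {w : ℕ → ℕ} {x : M} (hx : x ∈ K) (n : ℕ)
    (hball : ∀ k, k ≤ n + 1 → c.j x ∈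
      Metric.closedBall (nodeAt c P₀ w k).1.2.1 (nodeAt c P₀ w k).1.2.2) :
    pre w (n + 1) ∈ TKset c P₀ K (n + 1) := by
  refine ⟨pre_length w (n + 1), fun k hk => ?_⟩
  rw [pre_take hk]
  exact ⟨c.j x, hball k hk, mem_image_of_mem _ hx⟩

/-! ### the root -/

lemma exists_root (hns : ¬ Light (univ : Set M)) : Nonempty (GoodN c) := by
  obtain ⟨r, hr⟩ := (isCompact_univ (X := Hcube)).isBounded.subset_closedBall
    (c.j (c.f fun _ => 0))
  refine ⟨⟨⟨[], c.j (c.f fun _ => 0), max r 1⟩, ?_, ?_, ?_⟩⟩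
  · show ¬ Light (c.f '' cyl [])
    rw [cyl_nil, image_univ, c.hfs.range_eq]
    exact hns
  · intro x _
    exact Metric.closedBall_subset_closedBall (le_max_left _ _) (hr (mem_univ _))
  · exact lt_of_lt_of_le one_pos (le_max_right _ _)

/-! ### part (4) -/

end KTAux
end KTAuxSec6

noncomputable section KTAuxSec7
namespace KTAux
open Set Topology Filter Metric TopologicalSpace Function Classical

variable {M : Type u} [MetricSpace M]

lemma part4 (c : Ctx M) (hns : ¬ Light (univ : Set M)) : (kcRel M).Tukey baireRel := by
  obtain ⟨P₀⟩ := exists_root c hns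
  refine ⟨fun g : ℕ → ℕ => (ptF c P₀ g : M), fun K => PhiK c P₀ K.1, ?_⟩
  intro g K hgK
  have hfin : ∀ n, g n ≤ PhiK c P₀ K.1 n := by
    intro n
    have hmem : pre g (n + 1) ∈ TKset c P₀ K.1 (n + 1) :=
      mem_TKset_branch c P₀ hgK n fun k _ => pt_mem_ball c P₀ g k
    have := le_PhiK c P₀ K.2 hmem
    exact (pre_getD g n).symm.le.trans this
  exact hfin

/-! ### part (1) -/

lemma part1_core (c : Ctx M) (P₀ : GoodN c) (g : ℕ → ℕ) :
    ∃ S ∈ CS M, ∀ K : Set M, IsCompact K → NotClosedIn S K →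
      ∀ n, g n ≤ PhiK c P₀ K n := by
  set w : ℕ → ℕ → ℕ := fun n i => if i = n then g n + 1 else g i with hw_def
  set sp : ℕ → M := fun n => ptF c P₀ (w n) with hsp_def
  have hagree : ∀ n k, k ≤ n → nodeAt c P₀ (w n) k = nodeAt c P₀ g k := by
    intro n k hk
    apply nodeAt_congr
    intro i hi
    have hne : i ≠ n := by omega
    simp [hw_def, hne]
  have hballs : ∀ n k, k ≤ n → c.j (sp n) ∈
      Metric.closedBall (nodeAt c P₀ g k).1.2.1 (nodeAt c P₀ g k).1.2.2 := by
    intro n k hk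
    have := pt_mem_ball c P₀ (w n) k
    rwa [hagree n k hk] at this
  have hsib : ∀ n, c.j (sp n) ∈
      Metric.closedBall (stepN c (nodeAt c P₀ g n) (g n + 1)).1.2.1
        (stepN c (nodeAt c P₀ g n) (g n + 1)).1.2.2 := by
    intro n
    have h1 := pt_mem_ball c P₀ (w n) (n + 1)
    rw [nodeAt_succ] at h1
    have h2 : w n n = g n + 1 := if_pos rfl
    rwa [hagree n n le_rfl, h2] at h1
  have hptball : ∀ n, c.j (ptF c P₀ g) ∈
      Metric.closedBall (stepN c (nodeAt c P₀ g n) (g n)).1.2.1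
        (stepN c (nodeAt c P₀ g n) (g n)).1.2.2 := by
    intro n
    have := pt_mem_ball c P₀ g (n + 1)
    rwa [nodeAt_succ] at this
  have hne_pt : ∀ n, sp n ≠ ptF c P₀ g := by
    intro n h
    have h1 := hsib n
    have h2 := hptball n
    rw [h] at h1
    exact Set.disjoint_left.1
      (stepN_pair c (nodeAt c P₀ g n) (Nat.lt_succ_self (g n))).2 h1 h2
  have hne : ∀ n n', n < n' → sp n ≠ sp n' := by
    intro n n' hlt h
    have h1 := hsib n
    have h2 : c.j (sp n') ∈
        Metric.closedBall (stepN c (nodeAt c P₀ g n) (g n)).1.2.1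
          (stepN c (nodeAt c P₀ g n) (g n)).1.2.2 := by
      have := hballs n' (n + 1) (by omega)
      rwa [nodeAt_succ] at this
    rw [h] at h1
    exact Set.disjoint_left.1
      (stepN_pair c (nodeAt c P₀ g n) (Nat.lt_succ_self (g n))).2 h1 h2
  have hconv : Tendsto sp atTop (𝓝 (ptF c P₀ g)) := by
    rw [c.hjind.tendsto_nhds_iff, tendsto_iff_dist_tendsto_zero]
    have hb : ∀ n, dist ((c.j ∘ sp) n) (c.j (ptF c P₀ g)) ≤
        (2 * P₀.1.2.2) * (2⁻¹ : ℝ) ^ n := by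
      intro n
      have h1 : dist (c.j (sp n)) (nodeAt c P₀ g n).1.2.1 ≤ (nodeAt c P₀ g n).1.2.2 :=
        Metric.mem_closedBall.1 (hballs n n le_rfl)
      have h2 : dist (c.j (ptF c P₀ g)) (nodeAt c P₀ g n).1.2.1 ≤
          (nodeAt c P₀ g n).1.2.2 := Metric.mem_closedBall.1 (pt_mem_ball c P₀ g n)
      have h3 := nodeAt_rad c P₀ g n
      have h4 := dist_triangle (c.j (sp n)) (nodeAt c P₀ g n).1.2.1 (c.j (ptF c P₀ g))
      have h5 : dist (nodeAt c P₀ g n).1.2.1 (c.j (ptF c P₀ g)) =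
          dist (c.j (ptF c P₀ g)) (nodeAt c P₀ g n).1.2.1 := dist_comm _ _
      show dist (c.j (sp n)) (c.j (ptF c P₀ g)) ≤ (2 * P₀.1.2.2) * (2⁻¹ : ℝ) ^ n
      nlinarith [pow_pos (show (0:ℝ) < 2⁻¹ by norm_num) n]
    refine squeeze_zero (fun n => dist_nonneg) hb ?_
    have h0 := tendsto_pow_atTop_nhds_zero_of_lt_one
      (show (0:ℝ) ≤ 2⁻¹ by norm_num) (show (2⁻¹:ℝ) < 1 by norm_num)
    simpa using h0.const_mul (2 * P₀.1.2.2)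
  set eg : OnePoint ℕ → M := fun o => o.elim (ptF c P₀ g) sp with heg_def
  have hcont : Continuous eg := by
    rw [OnePoint.continuous_iff]
    constructor
    · rw [coclosedCompact_eq_cocompact, cocompact_eq_cofinite, Nat.cofinite_eq_atTop]
      exact hconv
    · exact continuous_of_discreteTopology
  have hinj : Injective eg := by
    intro o o' h
    cases o with
    | infty =>
      cases o' with
      | infty => rfl
      | coe n' => exact absurd h.symm (hne_pt n')
    | coe n =>
      cases o' with
      | infty => exact absurd h (hne_pt n)
      | coe n' =>
        rcases Nat.lt_trichotomy n n' with hlt | heq | hlt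
        · exact absurd h (hne n n' hlt)
        · rw [heq]
        · exact absurd h.symm (hne n' n hlt)
  refine ⟨eg '' Set.range ((↑) : ℕ → OnePoint ℕ),
    ⟨eg, (hcont.isClosedEmbedding hinj).toIsEmbedding, rfl⟩, ?_⟩
  intro K hK hNCI n
  set S := eg '' Set.range ((↑) : ℕ → OnePoint ℕ) with hS_def
  have hSrange : S = range sp := by
    ext y
    constructor
    · rintro ⟨o, ⟨m, rfl⟩, rfl⟩
      exact ⟨m, rfl⟩
    · rintro ⟨m, rfl⟩
      exact ⟨(m : OnePoint ℕ), ⟨m, rfl⟩, rfl⟩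
  have hinfK : (S ∩ K).Infinite := by
    by_contra hfin
    rw [Set.not_infinite] at hfin
    exact hNCI ⟨S ∩ K, hfin.isClosed, by rw [inter_assoc, inter_self]⟩
  have hinf2 : {m : ℕ | sp m ∈ K}.Infinite := by
    rw [hSrange] at hinfK
    have h2 := (hinfK.preimage (f := sp) inter_subset_left)
    refine h2.mono ?_
    intro m hm
    exact hm.2
  obtain ⟨m, hmK, hmn⟩ := hinf2.exists_gt n
  have hmem : pre g (n + 1) ∈ TKset c P₀ K (n + 1) :=
    mem_TKset_branch c P₀ hmK n fun k hk => hballs m k (by omega)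
  have := le_PhiK c P₀ hK hmem
  rwa [pre_getD] at this

lemma part1 (c : Ctx M) (hns : ¬ Light (univ : Set M)) : (kRel M).Tukey baireRel := by
  obtain ⟨P₀⟩ := exists_root c hns
  choose S hS hcond using part1_core c P₀
  refine ⟨fun g : ℕ → ℕ => (⟨S g, hS g⟩ : ↥(CS M)), fun K => PhiK c P₀ K.1, ?_⟩
  intro g K h
  have hfin : ∀ n, g n ≤ PhiK c P₀ K.1 n := fun n => hcond g K.1 K.2 h n
  exact hfin

end KTAux
end KTAuxSec7


/-- for a nonempty analytic, non-σ-compact separable metrizable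
space `M`, `𝐤(M) ≡_T (ℕ→ℕ, ≤) ≡_T 𝐤𝐜(M)`. -/
theorem analytic_not_sigmaCompact_kRel (M : Type u) [TopologicalSpace M]
    [TopologicalSpace.MetrizableSpace M] [TopologicalSpace.SeparableSpace M]
    [Nonempty M]
    (hanalytic : ∃ f : (ℕ → ℕ) → M, Continuous f ∧ Function.Surjective f)
    (hnotsigma : ¬∃ K : ℕ → Set M, (∀ n, IsCompact (K n)) ∧ (⋃ n, K n) = Set.univ) :
    (kRel M).TukeyEquiv baireRel ∧ baireRel.TukeyEquiv (kcRel M) := by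
  letI : MetricSpace M := TopologicalSpace.metrizableSpaceMetric M
  obtain ⟨f, hf, hfs⟩ := hanalytic
  have hq := TopologicalSpace.denseRange_denseSeq M
  set q := TopologicalSpace.denseSeq M with hq_def
  set c : KTAux.Ctx M := ⟨f, hf, hfs, KTAux.jmap q, KTAux.jmap_inj hq,
    KTAux.jmap_inducing hq⟩ with hc_def
  have hns : ¬ KTAux.Light (Set.univ : Set M) := by
    rintro ⟨D, hD, hsub⟩
    exact hnotsigma ⟨D, hD, Set.eq_univ_of_univ_subset hsub⟩
  exact ⟨⟨KTAux.part1 c hns, KTAux.part2 f hf hfs⟩,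
    ⟨KTAux.part3 f hf hfs, KTAux.part4 c hns⟩⟩
end

section
/- Let M be a separable metrizable space which is not Menger. Then 𝐤(M) ≥_T (ℕ→ℕ, ≤), where ≤ is the coordinatewise order on ℕ→ℕ. -/
open Set Topology Filter

universe u v u' v'

/-- The Menger covering property. -/
def IsMenger (X : Type u) [TopologicalSpace X] : Prop :=
  ∀ 𝒰 : ℕ → Set (Set X),
    (∀ n, (∀ U ∈ 𝒰 n, IsOpen U) ∧ ⋃₀ 𝒰 n = Set.univ) →
    ∃ 𝒱 : ℕ → Set (Set X),
      (∀ n, 𝒱 n ⊆ 𝒰 n ∧ (𝒱 n).Finite) ∧ (⋃ n, ⋃₀ 𝒱 n) = Set.univ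

section AuxProof

open OnePoint Function

/-- Auxiliary sequence of distinct points approaching a non-isolated point. -/
private noncomputable def niSeq {M : Type u} [MetricSpace M] (x : M)
    (F : ∀ ε : ℝ, 0 < ε → M) (hF : ∀ ε hε, F ε hε ≠ x) : ℕ → {y : M // y ≠ x}
  | 0 => ⟨F 1 one_pos, hF 1 one_pos⟩
  | (k + 1) => ⟨F (min (dist (niSeq x F hF k).1 x) ((k + 2 : ℕ) : ℝ)⁻¹)
      (lt_min (dist_pos.mpr (niSeq x F hF k).2) (by positivity)), hF _ _⟩

private lemma exists_onePoint_embedding {M : Type u} [MetricSpace M] {x : M}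
    (hx : ¬IsOpen ({x} : Set M)) :
    ∃ e : OnePoint ℕ → M, Topology.IsEmbedding e ∧ e OnePoint.infty = x := by
  rw [Metric.isOpen_singleton_iff] at hx
  push_neg at hx
  choose F hF1 hF2 using hx
  set s : ℕ → {y : M // y ≠ x} := niSeq x F hF2 with hs
  have hstep : ∀ k, dist (s (k + 1)).1 x <
      min (dist (s k).1 x) ((k + 2 : ℕ) : ℝ)⁻¹ := fun k => hF1 _ _
  have hlt : ∀ k, dist (s (k + 1)).1 x < dist (s k).1 x :=
    fun k => lt_of_lt_of_le (hstep k) (min_le_left _ _)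
  have hbound : ∀ k, dist (s k).1 x < ((k + 1 : ℕ) : ℝ)⁻¹ := by
    intro k
    cases k with
    | zero =>
      show dist (F 1 one_pos) x < _
      simpa using (hF1 1 one_pos)
    | succ k => exact lt_of_lt_of_le (hstep k) (min_le_right _ _)
  have hanti : StrictAnti (fun k => dist (s k).1 x) := strictAnti_nat_of_succ_lt hlt
  have hsinj : Function.Injective s := by
    intro i j hij
    exact hanti.injective (by rw [hij])
  have htend : Filter.Tendsto (fun k => (s k).1) Filter.atTop (nhds x) := by
    rw [tendsto_iff_dist_tendsto_zero]
    apply squeeze_zero (fun k => dist_nonneg) (fun k => le_of_lt (hbound k))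
    have : Filter.Tendsto (fun n : ℕ => 1 / ((n : ℝ) + 1)) Filter.atTop (nhds 0) :=
      tendsto_one_div_add_atTop_nhds_zero_nat
    convert this using 2 with k
    push_cast
    rw [one_div]
  refine ⟨fun o => o.elim x (fun k => (s k).1), ?_, rfl⟩
  have hcont : Continuous (fun o : OnePoint ℕ => o.elim x (fun k => (s k).1)) := by
    rw [OnePoint.continuous_iff_from_discrete, Nat.cofinite_eq_atTop]
    exact htend
  have hinj : Function.Injective (fun o : OnePoint ℕ => o.elim x (fun k => (s k).1)) := by
    intro a b hab
    induction a using OnePoint.rec with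
    | infty =>
      induction b using OnePoint.rec with
      | infty => rfl
      | coe k => exact absurd hab.symm (s k).2
    | coe j =>
      induction b using OnePoint.rec with
      | infty => exact absurd hab (s j).2
      | coe k =>
        have : s j = s k := Subtype.ext hab
        rw [hsinj this]
  exact (hcont.isClosedEmbedding hinj).toIsEmbedding

private lemma infty_mem_of_notClosedIn {M : Type u} [TopologicalSpace M] [T2Space M]
    {e : OnePoint ℕ → M} (he : Topology.IsEmbedding e) {K : Set M}
    (h : NotClosedIn (e '' Set.range ((↑) : ℕ → OnePoint ℕ)) K) :
    e OnePoint.infty ∈ K := by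
  by_contra hxK
  apply h
  refine ⟨closure (e '' Set.range ((↑) : ℕ → OnePoint ℕ) ∩ K), isClosed_closure, ?_⟩
  apply Set.Subset.antisymm
  · exact fun y hy => ⟨subset_closure hy, hy.2⟩
  · rintro y ⟨hyC, hyK⟩
    have hclos : closure (e '' Set.range ((↑) : ℕ → OnePoint ℕ) ∩ K) ⊆ Set.range e :=
      closure_minimal (fun z hz => Set.image_subset_range e _ hz.1)
        (isCompact_range he.continuous).isClosed
    obtain ⟨o, rfl⟩ := hclos hyC
    induction o using OnePoint.rec with
    | infty => exact absurd hyK hxK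
    | coe k => exact ⟨Set.mem_image_of_mem e (Set.mem_range_self k), hyK⟩

private lemma exists_anti_covers {M : Type u} [TopologicalSpace M]
    [SecondCountableTopology M] [Nonempty M] (h : ¬IsMenger M) :
    ∃ U : ℕ → ℕ → Set M, (∀ n m, IsOpen (U n m)) ∧ (∀ n, Monotone (U n)) ∧
      (∀ n, ⋃ m, U n m = Set.univ) ∧ ∀ f : ℕ → ℕ, (⋃ n, U n (f n)) ≠ Set.univ := by
  rw [IsMenger] at h
  push_neg at h
  obtain ⟨𝒰, h𝒰, hfail⟩ := h
  have key : ∀ n, ∃ V : ℕ → Set M, (∀ i, V i ∈ 𝒰 n) ∧ ⋃ i, V i = Set.univ := by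
    intro n
    obtain ⟨ho, hcov⟩ := h𝒰 n
    have hcov' : (Set.univ : Set M) ⊆ ⋃ W : 𝒰 n, (W : Set M) := by
      rw [← Set.sUnion_eq_iUnion, hcov]
    obtain ⟨t, htc, htcov⟩ := isLindelof_univ.elim_countable_subcover
      (fun W : 𝒰 n => (W : Set M)) (fun W => ho W W.2) hcov'
    have htne : t.Nonempty := by
      by_contra hte
      rw [Set.not_nonempty_iff_eq_empty] at hte
      have := htcov (Set.mem_univ (Classical.arbitrary M))
      rw [hte] at this
      simp at this
    obtain ⟨g, hg⟩ := htc.exists_eq_range htne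
    refine ⟨fun i => ((g i : 𝒰 n) : Set M), fun i => (g i).2, ?_⟩
    apply Set.Subset.antisymm (Set.subset_univ _)
    intro y hy
    have := htcov hy
    rw [hg] at this
    simp only [Set.mem_iUnion] at this ⊢
    obtain ⟨W, ⟨i, rfl⟩, hyW⟩ := this
    exact ⟨i, hyW⟩
  choose V hV1 hV2 using key
  refine ⟨fun n m => ⋃ i ≤ m, V n i, ?_, ?_, ?_, ?_⟩
  · exact fun n m => isOpen_biUnion fun i _ => (h𝒰 n).1 _ (hV1 n i)
  · intro n m m' hle
    exact Set.iUnion₂_mono' fun i hi => ⟨i, le_trans hi hle, Set.Subset.rfl⟩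
  · intro n
    apply Set.Subset.antisymm (Set.subset_univ _)
    intro y _
    have : y ∈ ⋃ i, V n i := by rw [hV2 n]; exact Set.mem_univ y
    obtain ⟨i, hi⟩ := Set.mem_iUnion.mp this
    exact Set.mem_iUnion.mpr ⟨i, Set.mem_iUnion₂.mpr ⟨i, le_rfl, hi⟩⟩
  · intro f hcontra
    apply hfail (fun n => V n '' Set.Iic (f n))
    · intro n
      constructor
      · rintro _ ⟨i, _, rfl⟩
        exact hV1 n i
      · exact (Set.finite_Iic (f n)).image _
    · rw [← hcontra]
      apply Set.iUnion_congr
      intro n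
      rw [Set.sUnion_image]
      apply Set.iUnion_congr
      intro i
      simp [Set.mem_Iic]

private lemma exists_nonisolated_notMem {M : Type u} [TopologicalSpace M]
    [TopologicalSpace.SeparableSpace M]
    (U : ℕ → ℕ → Set M) (hmono : ∀ n, Monotone (U n)) (hcov : ∀ n, ⋃ m, U n m = Set.univ)
    (hfail : ∀ f : ℕ → ℕ, (⋃ n, U n (f n)) ≠ Set.univ) (f : ℕ → ℕ) :
    ∃ x, ¬IsOpen ({x} : Set M) ∧ x ∉ ⋃ n, U n (f n) := by
  by_contra hc
  push_neg at hc
  set Z : Set M := (⋃ n, U n (f n))ᶜ with hZ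
  have hZiso : ∀ x ∈ Z, IsOpen ({x} : Set M) :=
    fun x hx => by_contra fun ho => hx (hc x ho)
  obtain ⟨D, hDc, hDd⟩ := TopologicalSpace.exists_countable_dense M
  have hZD : Z ⊆ D := by
    intro x hx
    obtain ⟨y, hy1, hy2⟩ := hDd.inter_open_nonempty _ (hZiso x hx) ⟨x, rfl⟩
    rwa [← hy1]
  have hZcnt : Z.Countable := hDc.mono hZD
  rcases Z.eq_empty_or_nonempty with hZe | hZne
  · exact hfail f (Set.compl_empty_iff.mp hZe)
  · obtain ⟨z, hz⟩ := hZcnt.exists_eq_range hZne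
    have hfin : ∀ n : ℕ, ∃ m, f n ≤ m ∧ ∀ i ≤ n, z i ∈ U n m := by
      intro n
      have hz' : ∀ i : ℕ, ∃ m, z i ∈ U n m := by
        intro i
        have : z i ∈ ⋃ m, U n m := by rw [hcov n]; exact Set.mem_univ _
        exact Set.mem_iUnion.mp this
      choose g hg using hz'
      refine ⟨max (f n) ((Finset.range (n + 1)).sup g), le_max_left _ _, fun i hi => ?_⟩
      exact hmono n (le_trans (Finset.le_sup (f := g) (Finset.mem_range.mpr (by omega)))
        (le_max_right _ _)) (hg i)
    choose g hg1 hg2 using hfin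
    apply hfail g
    apply Set.Subset.antisymm (Set.subset_univ _)
    intro x _
    by_cases hx : x ∈ ⋃ n, U n (f n)
    · obtain ⟨n, hn⟩ := Set.mem_iUnion.mp hx
      exact Set.mem_iUnion.mpr ⟨n, hmono n (hg1 n) hn⟩
    · have hxZ : x ∈ Z := hx
      rw [hz] at hxZ
      obtain ⟨j, hj⟩ := hxZ
      exact Set.mem_iUnion.mpr ⟨j, hj ▸ hg2 j j le_rfl⟩

end AuxProof

/-- if a separable metrizable space `M` is not Menger then
`𝐤(M) ≥_T (ℕ→ℕ, ≤)`. -/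
theorem not_menger_kRel_tukey_baire (M : Type u) [TopologicalSpace M]
    [TopologicalSpace.MetrizableSpace M] [TopologicalSpace.SeparableSpace M]
    (h : ¬IsMenger M) :
    (kRel M).Tukey baireRel := by
  letI : MetricSpace M := TopologicalSpace.metrizableSpaceMetric M
  haveI : SecondCountableTopology M :=
    UniformSpace.secondCountable_of_separable M
  rcases isEmpty_or_nonempty M with hM | hM
  · exfalso
    apply h
    intro 𝒰 _
    refine ⟨fun _ => ∅, fun n => ⟨Set.empty_subset _, Set.finite_empty⟩, ?_⟩
    simp [Set.univ_eq_empty_iff.mpr hM]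
  · obtain ⟨U, hUo, hUm, hUc, hUf⟩ := exists_anti_covers h
    choose x hxiso hxmem using exists_nonisolated_notMem U hUm hUc hUf
    choose e he hei using fun f => exists_onePoint_embedding (hxiso f)
    have hφ : ∀ (K : {K : Set M // IsCompact K}) (n : ℕ), ∃ m, K.1 ⊆ U n m := by
      intro K n
      obtain ⟨t, ht⟩ := K.2.elim_finite_subcover (U n) (hUo n)
        (by rw [hUc n]; exact Set.subset_univ _)
      exact ⟨t.sup id, ht.trans (Set.iUnion₂_subset fun i hi =>
        hUm n (Finset.le_sup (f := id) hi))⟩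
    choose φ hφ using hφ
    refine ⟨fun f => ⟨e f '' Set.range ((↑) : ℕ → OnePoint ℕ), e f, he f, rfl⟩, φ, ?_⟩
    intro f K hrel
    have hx : x f ∈ K.1 := by
      have := infty_mem_of_notClosedIn (he f) hrel
      rwa [hei f] at this
    intro n
    by_contra hlt
    rw [not_le] at hlt
    exact hxmem f (Set.mem_iUnion.mpr ⟨n, hUm n (le_of_lt hlt) (hφ K n hx)⟩)
end

section
/- Let X be a Hausdorff topological space and suppose the point x ∈ X has a local base (B_n)_{n∈ℕ} of open neighborhoods which is strictly decreasing (B_n ⊋ B_{n+1} for all n). For each n let D_n = B_n \ B_{n+1} and κ_n = |D_n|. Then 𝐬𝐞𝐪(x, X) = (CS(x,X), CS(x,X), ii) is Tukey equivalent to the relation ((∏_n [κ_n]^{<ω})_∞, i_∞). -/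
open Set Topology Filter

universe u v u' v'

section SeqPtAux

set_option linter.unusedSectionVars false

variable {X : Type u} [TopologicalSpace X] {x : X} {B : ℕ → Set X}

lemma mem_CSpt_of_props [T2Space X] {S : Set X}
    (hxS : x ∉ S) (hC : S.Countable) (hI : S.Infinite)
    (hconv : ∀ U ∈ 𝓝 x, (S \ U).Finite) : S ∈ CSpt x := by
  have hcount : Countable ↥S := hC.to_subtype
  have hinf : Infinite ↥S := hI.to_subtype
  obtain ⟨d⟩ := nonempty_denumerable ↥S
  let g : ℕ → ↥S := (Denumerable.eqv ↥S).symm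
  have hgs : Function.Surjective g := (Denumerable.eqv ↥S).symm.surjective
  have hgi : Function.Injective (fun n => ((g n : X))) :=
    Subtype.val_injective.comp (Denumerable.eqv ↥S).symm.injective
  let e : OnePoint ℕ → X := fun o => o.elim x (fun n => (g n : X))
  have hecoe : ∀ n : ℕ, e ↑n = (g n : X) := fun n => rfl
  have heinf : e OnePoint.infty = x := rfl
  have hcont : Continuous e := by
    rw [OnePoint.continuous_iff_from_discrete]
    rw [heinf, Filter.tendsto_def]
    intro U hU
    rw [Filter.mem_cofinite]
    have hsub : ((fun n : ℕ => e ↑n) ⁻¹' U)ᶜ ⊆ (fun n : ℕ => (g n : X)) ⁻¹' (S \ U) := by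
      intro n hn
      exact ⟨(g n).2, hn⟩
    exact ((hconv U hU).preimage (hgi.injOn)).subset hsub
  have hinj : Function.Injective e := by
    intro o o' h
    induction o using OnePoint.rec with
    | infty =>
      induction o' using OnePoint.rec with
      | infty => rfl
      | coe n => exact absurd ((heinf ▸ h) ▸ (g n).2) hxS
    | coe n =>
      induction o' using OnePoint.rec with
      | infty => exact absurd ((heinf ▸ h.symm) ▸ (g n).2) hxS
      | coe m => exact congrArg _ (hgi h)
  refine ⟨e, (hcont.isClosedEmbedding hinj).toIsEmbedding, heinf, ?_⟩
  rw [← Set.range_comp]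
  ext y
  simp only [Set.mem_range]
  constructor
  · intro hy
    obtain ⟨n, hn⟩ := hgs ⟨y, hy⟩
    exact ⟨n, congrArg Subtype.val hn⟩
  · rintro ⟨n, rfl⟩; exact (g n).2

lemma CSpt_props {T : Set X} (hT : T ∈ CSpt x) :
    x ∉ T ∧ T.Countable ∧ T.Infinite ∧ ∀ U ∈ 𝓝 x, (T \ U).Finite := by
  obtain ⟨e, he, hex, rfl⟩ := hT
  refine ⟨?_, (Set.countable_range _).image _, ?_, ?_⟩
  · rintro ⟨o, ⟨n, rfl⟩, h⟩
    exact OnePoint.coe_ne_infty n (he.injective (h.trans hex.symm))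
  · exact (Set.infinite_range_of_injective OnePoint.coe_injective).image he.injective.injOn
  · intro U hU
    have h2 : Tendsto (fun n : ℕ => e ↑n) cofinite (𝓝 x) := by
      have := (OnePoint.continuous_iff_from_discrete e).mp he.continuous
      rwa [hex] at this
    have h3 := h2 hU
    rw [Filter.mem_map, Filter.mem_cofinite] at h3
    have h4 : ((fun n : ℕ => e ↑n) '' ((fun n : ℕ => e ↑n) ⁻¹' U)ᶜ).Finite :=
      Set.Finite.image _ h3
    refine h4.subset ?_
    rintro y ⟨⟨o, ⟨n, rfl⟩, rfl⟩, hyU⟩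
    exact ⟨n, hyU, rfl⟩

/-- The chosen bijection from `(#(B n \ B (n+1))).out` to `B n \ B (n+1)`, composed with
the inclusion into `X`. -/
noncomputable def auxPt (B : ℕ → Set X) (n : ℕ)
    (a : (Cardinal.mk ↥(B n \ B (n + 1))).out) : X :=
  ((Cardinal.outMkEquiv a : ↥(B n \ B (n + 1))) : X)

lemma auxPt_mem (B : ℕ → Set X) (n : ℕ) (a : (Cardinal.mk ↥(B n \ B (n + 1))).out) :
    auxPt B n a ∈ B n \ B (n + 1) :=
  (Cardinal.outMkEquiv (α := ↥(B n \ B (n + 1))) a).2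

lemma auxPt_inj (B : ℕ → Set X) (n : ℕ) : Function.Injective (auxPt B n) :=
  Subtype.val_injective.comp (Cardinal.outMkEquiv (α := ↥(B n \ B (n + 1)))).injective

lemma auxPt_surj (B : ℕ → Set X) (n : ℕ) {y : X} (hy : y ∈ B n \ B (n + 1)) :
    ∃ a, auxPt B n a = y :=
  ⟨Cardinal.outMkEquiv.symm ⟨y, hy⟩, congrArg Subtype.val (Equiv.apply_symm_apply _ _)⟩

/-- The union set built from a sequence of finite sets. -/
noncomputable def auxSF (B : ℕ → Set X)
    (F : (n : ℕ) → Finset (Cardinal.mk ↥(B n \ B (n + 1))).out) : Set X :=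
  ⋃ n, auxPt B n '' ↑(F n)

lemma auxD_eq (hdec : ∀ n, B (n + 1) ⊂ B n) {m n : ℕ} {y : X}
    (hm : y ∈ B m \ B (m + 1)) (hn : y ∈ B n \ B (n + 1)) : m = n := by
  have hanti : Antitone B := antitone_nat_of_succ_le fun k => (hdec k).subset
  by_contra h
  rcases Nat.lt_or_ge m n with hlt | hge
  · exact hm.2 (hanti hlt hn.1)
  · exact hn.2 (hanti (lt_of_le_of_ne hge (Ne.symm h)) hm.1)

/-- Finding the "shell" of a point near `x`. -/
lemma auxFind [T2Space X] (hbase : ∀ U ∈ nhds x, ∃ n, B n ⊆ U) {y : X}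
    (hy0 : y ∈ B 0) (hyx : y ≠ x) : ∃ n, y ∈ B n \ B (n + 1) := by
  classical
  have hyn : ∃ n, y ∉ B n := by
    obtain ⟨U, V, hU, hV, hxU, hyV, hUV⟩ := t2_separation (Ne.symm hyx)
    obtain ⟨n, hn⟩ := hbase U (hU.mem_nhds hxU)
    exact ⟨n, fun hyBn => (Set.disjoint_left.mp hUV (hn hyBn)) hyV⟩
  have hk0 : Nat.find hyn ≠ 0 := fun h => (h ▸ Nat.find_spec hyn) hy0
  refine ⟨Nat.find hyn - 1, ?_, ?_⟩
  · have := Nat.find_min hyn (m := Nat.find hyn - 1) (by omega)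
    exact not_not.mp this
  · have : Nat.find hyn - 1 + 1 = Nat.find hyn := by omega
    rw [this]
    exact Nat.find_spec hyn

lemma auxSF_mem [T2Space X] (hopen : ∀ n, IsOpen (B n)) (hmem : ∀ n, x ∈ B n)
    (hdec : ∀ n, B (n + 1) ⊂ B n) (hbase : ∀ U ∈ nhds x, ∃ n, B n ⊆ U)
    (F : (n : ℕ) → Finset (Cardinal.mk ↥(B n \ B (n + 1))).out)
    (hF : {n | F n ≠ ∅}.Infinite) : auxSF B F ∈ CSpt x := by
  have hanti : Antitone B := antitone_nat_of_succ_le fun k => (hdec k).subset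
  apply mem_CSpt_of_props
  · intro hx
    obtain ⟨n, a, _, ha⟩ := Set.mem_iUnion.mp hx
    exact (ha ▸ auxPt_mem B n a).2 (hmem (n + 1))
  · exact Set.countable_iUnion fun n => ((F n).finite_toSet.image _).countable
  · haveI : Infinite ↥{n | F n ≠ ∅} := hF.to_subtype
    apply Set.infinite_of_injective_forall_mem
      (f := fun p : ↥{n | F n ≠ ∅} =>
        auxPt B p.1 (Finset.nonempty_iff_ne_empty.mpr p.2).choose)
    · intro p q h
      simp only at h
      apply Subtype.ext
      refine auxD_eq hdec
        (auxPt_mem B p.1 (Finset.nonempty_iff_ne_empty.mpr p.2).choose) ?_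
      rw [h]
      exact auxPt_mem B q.1 _
    · intro p
      exact Set.mem_iUnion.mpr ⟨p.1, Set.mem_image_of_mem _
        (Finset.nonempty_iff_ne_empty.mpr p.2).choose_spec⟩
  · intro U hU
    obtain ⟨m, hmU⟩ := hbase U hU
    have hsub : auxSF B F \ U ⊆ ⋃ n ∈ Finset.range m, auxPt B n '' ↑(F n) := by
      rintro y ⟨hy, hyU⟩
      obtain ⟨n, a, ha, rfl⟩ := Set.mem_iUnion.mp hy
      rcases Nat.lt_or_ge n m with hlt | hge
      · exact Set.mem_biUnion (Finset.mem_range.mpr hlt) ⟨a, ha, rfl⟩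
      · exact absurd (hmU (hanti hge (auxPt_mem B n a).1)) hyU
    exact (((Finset.range m).finite_toSet.biUnion
      fun n _ => (F n).finite_toSet.image _).subset hsub)

/-- The trace of a set `T` on the `n`-th shell, pulled back. -/
def auxGs (B : ℕ → Set X) (T : Set X) (n : ℕ) :
    Set (Cardinal.mk ↥(B n \ B (n + 1))).out :=
  auxPt B n ⁻¹' T

lemma auxGs_finite (hopen : ∀ n, IsOpen (B n)) (hmem : ∀ n, x ∈ B n)
    {T : Set X} (hTconv : ∀ U ∈ 𝓝 x, (T \ U).Finite) (n : ℕ) :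
    (auxGs B T n).Finite := by
  have hfin : (T \ B (n + 1)).Finite :=
    hTconv (B (n + 1)) ((hopen (n + 1)).mem_nhds (hmem (n + 1)))
  have hsub : auxGs B T n ⊆ auxPt B n ⁻¹' (T \ B (n + 1)) :=
    fun a ha => ⟨ha, (auxPt_mem B n a).2⟩
  exact (hfin.preimage (auxPt_inj B n).injOn).subset hsub

lemma auxGs_infinite [T2Space X] (hopen : ∀ n, IsOpen (B n)) (hmem : ∀ n, x ∈ B n)
    (hbase : ∀ U ∈ nhds x, ∃ n, B n ⊆ U)
    {T : Set X} (hxT : x ∉ T) (hTinf : T.Infinite)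
    (hTconv : ∀ U ∈ 𝓝 x, (T \ U).Finite) :
    {n | (auxGs B T n).Nonempty}.Infinite := by
  by_contra h
  rw [Set.not_infinite] at h
  have hT0 : (T \ B 0).Finite := hTconv (B 0) ((hopen 0).mem_nhds (hmem 0))
  have hpieces : (⋃ n ∈ {n | (auxGs B T n).Nonempty}, (T ∩ (B n \ B (n + 1)))).Finite :=
    h.biUnion fun n _ =>
      ((hTconv (B (n + 1)) ((hopen (n + 1)).mem_nhds (hmem (n + 1)))).subset
        (fun y hy => ⟨hy.1, hy.2.2⟩))
  have hTsub : T ⊆ (T \ B 0) ∪ ⋃ n ∈ {n | (auxGs B T n).Nonempty}, (T ∩ (B n \ B (n + 1))) := by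
    intro y hyT
    by_cases hy0 : y ∈ B 0
    · have hyx : y ≠ x := fun h => hxT (h ▸ hyT)
      obtain ⟨n, hn⟩ := auxFind hbase hy0 hyx
      obtain ⟨a, ha⟩ := auxPt_surj B n hn
      exact Or.inr (Set.mem_biUnion ⟨a, show auxPt B n a ∈ T from ha ▸ hyT⟩ ⟨hyT, hn⟩)
    · exact Or.inl ⟨hyT, hy0⟩
  exact hTinf (Set.Finite.subset (hT0.union hpieces) hTsub)

end SeqPtAux

/-- if `x` has a strictly decreasing local base `(B n)` of open
neighborhoods, with `D n = B n \ B (n+1)` and `κ n = |D n|`, then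
`𝐬𝐞𝐪(x, X) ≡_T ((∏_n [κ_n]^{<ω})_∞, i_∞)`. -/
theorem seqPt_equiv_Qrel (X : Type u) [TopologicalSpace X] [T2Space X] (x : X)
    (B : ℕ → Set X)
    (hopen : ∀ n, IsOpen (B n)) (hmem : ∀ n, x ∈ B n)
    (hdec : ∀ n, B (n + 1) ⊂ B n)
    (hbase : ∀ U ∈ nhds x, ∃ n, B n ⊆ U) :
    (seqPtRel x).TukeyEquiv (Qrel fun n => Cardinal.mk ↥(B n \ B (n + 1))) := by
  constructor
  · -- seqPt(x,X) ≥_T Qrel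
    refine ⟨fun F => ⟨auxSF B F.1, auxSF_mem hopen hmem hdec hbase F.1 F.2⟩,
      fun T => ⟨fun n => (auxGs_finite hopen hmem (CSpt_props T.2).2.2.2 n).toFinset, by
        obtain ⟨hxT, _, hTinf, hTconv⟩ := CSpt_props T.2
        refine (auxGs_infinite hopen hmem hbase hxT hTinf hTconv).mono ?_
        intro n hn he
        rw [Set.Finite.toFinset_eq_empty] at he
        exact hn.ne_empty he⟩, ?_⟩
    intro F T hrel
    have hM : {n | (auxPt B n '' ↑(F.1 n) ∩ T.1).Nonempty}.Infinite := by
      by_contra h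
      rw [Set.not_infinite] at h
      have hfin : (⋃ n ∈ {n | (auxPt B n '' ↑(F.1 n) ∩ T.1).Nonempty},
          (auxPt B n '' ↑(F.1 n) ∩ T.1)).Finite :=
        h.biUnion fun n _ => ((F.1 n).finite_toSet.image _).inter_of_left _
      refine hrel (hfin.subset ?_)
      rintro y ⟨hy1, hy2⟩
      obtain ⟨n, hn⟩ := Set.mem_iUnion.mp hy1
      exact Set.mem_biUnion ⟨y, hn, hy2⟩ ⟨hn, hy2⟩
    refine hM.mono ?_
    rintro n ⟨y, ⟨a, ha, rfl⟩, hyT⟩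
    exact ⟨a, ha, (Set.Finite.mem_toFinset _).mpr hyT⟩
  · -- Qrel ≥_T seqPt(x,X)
    refine ⟨fun S => ⟨fun n => (auxGs_finite hopen hmem (CSpt_props S.2).2.2.2 n).toFinset, by
        obtain ⟨hxS, _, hSinf, hSconv⟩ := CSpt_props S.2
        refine (auxGs_infinite hopen hmem hbase hxS hSinf hSconv).mono ?_
        intro n hn he
        rw [Set.Finite.toFinset_eq_empty] at he
        exact hn.ne_empty he⟩,
      fun G => ⟨auxSF B G.1, auxSF_mem hopen hmem hdec hbase G.1 G.2⟩, ?_⟩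
    intro S G hrel
    have hrel' : {n | ∃ a, a ∈ auxGs B S.1 n ∧ a ∈ G.1 n}.Infinite := by
      refine hrel.mono ?_
      rintro n ⟨a, ha1, ha2⟩
      exact ⟨a, (Set.Finite.mem_toFinset _).mp ha1, ha2⟩
    haveI := hrel'.to_subtype
    apply Set.infinite_of_injective_forall_mem
      (f := fun p : ↥{n | ∃ a, a ∈ auxGs B S.1 n ∧ a ∈ G.1 n} => auxPt B p.1 p.2.choose)
    · intro p q h
      simp only at h
      apply Subtype.ext
      refine auxD_eq hdec (auxPt_mem B p.1 p.2.choose) ?_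
      rw [h]
      exact auxPt_mem B q.1 _
    · intro p
      obtain ⟨h1, h2⟩ := p.2.choose_spec
      exact ⟨h1, Set.mem_iUnion.mpr ⟨p.1, Set.mem_image_of_mem _ h2⟩⟩
end

section
/- Let X be a set of cardinality ℵ_ω and let 𝒞 be a family of countable subsets of X such that for every countably infinite subset A of X there exists C ∈ 𝒞 with A ∩ C infinite. Then |𝒞| > ℵ_ω (equivalently, |𝒞| ≥ ℵ_{ω+1}). -/
universe u

open Cardinal Set

/-- if `X` has cardinality `ℵ_ω` and `𝒞` is a family of countable
subsets of `X` such that every countably infinite `A ⊆ X` has infinite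
intersection with some member of `𝒞`, then `|𝒞| > ℵ_ω`. -/
theorem family_catching_countable_sets_is_large (X : Type u)
    (hX : Cardinal.mk X = Cardinal.aleph Ordinal.omega0)
    (𝒞 : Set (Set X)) (hctble : ∀ C ∈ 𝒞, C.Countable)
    (hcatch : ∀ A : Set X, A.Countable → A.Infinite →
      ∃ C ∈ 𝒞, (A ∩ C).Infinite) :
    Cardinal.aleph Ordinal.omega0 < Cardinal.mk 𝒞 := by
  by_contra hlt
  push_neg at hlt
  -- Step 1: embed `𝒞` into a sigma type stratified by `ℕ`.
  have hsum : #𝒞 ≤ #(Σ n : ℕ, (Cardinal.aleph (n : Ordinal.{u})).out) := by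
    rw [mk_sigma]
    refine hlt.trans ?_
    rw [Cardinal.aleph_limit Ordinal.isSuccLimit_omega0]
    haveI : Nonempty (Iio Ordinal.omega0) := ⟨⟨0, Ordinal.omega0_pos⟩⟩
    refine ciSup_le ?_
    rintro ⟨a, ha⟩
    obtain ⟨n, rfl⟩ := Ordinal.lt_omega0.mp ha
    simpa using Cardinal.le_sum (fun n : ℕ => #(Cardinal.aleph (n : Ordinal.{u})).out) n
  obtain ⟨j⟩ := (Cardinal.le_def _ _).mp hsum
  -- levels
  set S : ℕ → Set 𝒞 := fun n => {c | (j c).1 ≤ n} with hSdef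
  have hS : ∀ n, #(S n) ≤ Cardinal.aleph (n : Ordinal.{u}) := by
    intro n
    have emb : (S n) ↪ Σ k : Fin (n + 1), (Cardinal.aleph ((k : ℕ) : Ordinal.{u})).out := by
      refine ⟨fun c => ⟨⟨(j c.1).1, Nat.lt_succ_of_le c.2⟩, (j c.1).2⟩, ?_⟩
      intro c c' h
      have h2 : j c.1 = j c'.1 := by
        have := congrArg
          (fun p : Σ k : Fin (n + 1), (Cardinal.aleph ((k : ℕ) : Ordinal.{u})).out =>
            (⟨(p.1 : ℕ), p.2⟩ : Σ m : ℕ, (Cardinal.aleph (m : Ordinal.{u})).out)) h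
        exact this
      exact Subtype.ext (j.injective h2)
    calc #(S n) ≤ #(Σ k : Fin (n + 1), (Cardinal.aleph ((k : ℕ) : Ordinal.{u})).out) :=
          Cardinal.mk_le_of_injective emb.injective
      _ = Cardinal.sum (fun k : Fin (n + 1) => Cardinal.aleph ((k : ℕ) : Ordinal.{u})) := by
          rw [mk_sigma]; congr 1; funext k; exact mk_out _
      _ ≤ Cardinal.sum (fun _ : Fin (n + 1) => Cardinal.aleph (n : Ordinal.{u})) := by
          refine Cardinal.sum_le_sum _ _ fun k => ?_
          exact Cardinal.aleph_le_aleph.2 (by exact_mod_cast Nat.cast_le.2 (Nat.lt_succ_iff.1 k.2))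
      _ ≤ Cardinal.aleph (n : Ordinal.{u}) := by
          rw [Cardinal.sum_const]
          simp only [Cardinal.mk_fintype, Fintype.card_fin, Cardinal.lift_natCast, Cardinal.lift_id, Cardinal.lift_id']
          calc ((n + 1 : ℕ) : Cardinal) * Cardinal.aleph (n : Ordinal.{u})
              ≤ Cardinal.aleph (n : Ordinal.{u}) * Cardinal.aleph (n : Ordinal.{u}) :=
                mul_le_mul_left ((Cardinal.nat_lt_aleph0 _).le.trans (Cardinal.aleph0_le_aleph _)) _
            _ = Cardinal.aleph (n : Ordinal.{u}) := Cardinal.mul_eq_self (Cardinal.aleph0_le_aleph _)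
  -- the unions
  set U : ℕ → Set X := fun n => ⋃ s : S n, ((s : 𝒞) : Set X) with hUdef
  have hU : ∀ n, #(U n) < #X := by
    intro n
    have h1 : #(U n) ≤ Cardinal.sum (fun s : S n => #((s : 𝒞) : Set X)) :=
      Cardinal.mk_iUnion_le_sum_mk
    have h2 : Cardinal.sum (fun s : S n => #((s : 𝒞) : Set X)) ≤
        Cardinal.sum (fun _ : S n => (Cardinal.aleph0 : Cardinal.{u})) := by
      refine Cardinal.sum_le_sum _ _ fun s => ?_
      exact (hctble _ (s : 𝒞).2).le_aleph0
    have h3 : Cardinal.sum (fun _ : S n => (Cardinal.aleph0 : Cardinal.{u})) =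
        #(S n) * Cardinal.aleph0 := Cardinal.sum_const' _ _
    have h4 : #(S n) * Cardinal.aleph0 ≤
        Cardinal.aleph (n : Ordinal.{u}) * Cardinal.aleph (n : Ordinal.{u}) :=
      mul_le_mul' (hS n) (Cardinal.aleph0_le_aleph _)
    have h5 : #(U n) ≤ Cardinal.aleph (n : Ordinal.{u}) := by
      rw [← Cardinal.mul_eq_self (Cardinal.aleph0_le_aleph (n : Ordinal.{u}))]
      exact h1.trans (h2.trans (h3.le.trans h4))
    refine h5.trans_lt ?_
    rw [hX]
    exact Cardinal.aleph_lt_aleph.2 (Ordinal.nat_lt_omega0 n)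
  -- pick new points avoiding `U n` and previous points
  have key : ∀ n (v : Fin n → X), ∃ y : X, y ∉ U n ∧ ∀ i, y ≠ v i := by
    intro n v
    by_contra h
    push_neg at h
    have hcover : (univ : Set X) ⊆ U n ∪ Set.range v := by
      intro y _
      rcases Classical.em (y ∈ U n) with hy | hy
      · exact Or.inl hy
      · obtain ⟨i, hi⟩ := h y hy
        exact Or.inr ⟨i, hi.symm⟩
    have hlt2 : #(U n ∪ Set.range v : Set X) < #X := by
      refine (Cardinal.mk_union_le _ _).trans_lt ?_
      refine Cardinal.add_lt_of_lt ?_ (hU n) ?_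
      · rw [hX]; exact Cardinal.aleph0_le_aleph _
      · refine ((Set.finite_range v).lt_aleph0).trans_le ?_
        rw [hX]; exact Cardinal.aleph0_le_aleph _
    have := Cardinal.mk_le_mk_of_subset hcover
    rw [Cardinal.mk_univ] at this
    exact absurd this (not_le.2 hlt2)
  choose! h hmem hne using key
  -- construct the sequence
  let v : (n : ℕ) → Fin n → X := fun n => Nat.rec Fin.elim0 (fun n vn => Fin.snoc vn (h n vn)) n
  let x : ℕ → X := fun n => h n (v n)
  have hv : ∀ n m (hmn : m < n), v n ⟨m, hmn⟩ = x m := by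
    intro n
    induction n with
    | zero => intro m hm; exact absurd hm (Nat.not_lt_zero m)
    | succ n ih =>
      intro m hm
      have hstep : v (n + 1) = Fin.snoc (v n) (h n (v n)) := rfl
      rcases Nat.lt_succ_iff_lt_or_eq.mp hm with hm' | rfl
      · have hfin : (⟨m, hm⟩ : Fin (n + 1)) = Fin.castSucc ⟨m, hm'⟩ := rfl
        rw [hstep, hfin, Fin.snoc_castSucc]
        exact ih m hm'
      · have hfin : (⟨m, hm⟩ : Fin (m + 1)) = Fin.last m := rfl
        rw [hstep, hfin, Fin.snoc_last]
  have hxU : ∀ n, x n ∉ U n := fun n => hmem n (v n)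
  have hxinj : Function.Injective x := by
    have hne' : ∀ m n, m < n → x n ≠ x m := by
      intro m n hmn
      have := hne n (v n) ⟨m, hmn⟩
      rwa [hv n m hmn] at this
    intro a b hab
    rcases lt_trichotomy a b with hab' | hab' | hab'
    · exact absurd hab.symm (hne' a b hab')
    · exact hab'
    · exact absurd hab (hne' b a hab')
  -- the set A
  obtain ⟨C, hC, hinf⟩ := hcatch (Set.range x) (Set.countable_range x)
    (Set.infinite_range_of_injective hxinj)
  set k : ℕ := (j ⟨C, hC⟩).1 with hk
  have hCU : ∀ m, k ≤ m → C ⊆ U m := by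
    intro m hkm y hy
    exact Set.mem_iUnion.2 ⟨⟨⟨C, hC⟩, hkm⟩, hy⟩
  have hsub : Set.range x ∩ C ⊆ x '' (Set.Iio k) := by
    rintro a ⟨⟨m, rfl⟩, haC⟩
    refine ⟨m, ?_, rfl⟩
    simp only [Set.mem_Iio]
    by_contra hmk
    push_neg at hmk
    exact hxU m (hCU m hmk haC)
  exact hinf (((Set.finite_Iio k).image x).subset hsub)
end
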